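/- arXiv:2502.16336 — 3 statements merged into one kernel-verified Lean document; each statement's English description precedes it below -/
import Mathlib

section
/- Let α ∈ (0,1) and suppose τ⋆(x) := Q_{1−α}(P_{V|X=x}) > 0 for every x ∈ 𝒳 and is measurable. Define the rectified score Ṽ(x,y) := V(x,y)/τ⋆(x) and let Ṽ := Ṽ(X,Y). Then Q_{1−α}(P_{Ṽ}) = 1 and, for P_X-almost every x ∈ 𝒳, Q_{1−α}(P_{Ṽ|X=x}) = 1; in particular the marginal and conditional (1−α)-quantiles of the rectified score coincide. -/
open MeasureTheory ProbabilityTheory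

/-- The `β`-quantile of a probability measure `P` on `ℝ`:
`Q_β(P) = inf {t : P((-∞, t]) ≥ β}`. -/
noncomputable def quantile (P : Measure ℝ) (β : ℝ) : ℝ :=
  sInf {t : ℝ | ENNReal.ofReal β ≤ P (Set.Iic t)}

lemma quantile_set_nonempty (P : Measure ℝ) [IsProbabilityMeasure P] {β : ℝ} (hβ : β < 1) :
    {t : ℝ | ENNReal.ofReal β ≤ P (Set.Iic t)}.Nonempty := by
  have hsup : (⨆ n : ℕ, P (Set.Iic (n : ℝ))) = P Set.univ := by
    rw [← Directed.measure_iUnion]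
    · congr 1
      ext x
      simp only [Set.mem_iUnion, Set.mem_Iic, Set.mem_univ, iff_true]
      exact ⟨⌈x⌉₊, Nat.le_ceil x⟩
    · exact Monotone.directed_le fun m n hmn => Set.Iic_subset_Iic.mpr (by exact_mod_cast hmn)
  have hlt : ENNReal.ofReal β < ⨆ n : ℕ, P (Set.Iic (n : ℝ)) := by
    rw [hsup, measure_univ]
    exact ENNReal.ofReal_lt_one.mpr hβ
  obtain ⟨n, hn⟩ := lt_iSup_iff.mp hlt
  exact ⟨n, hn.le⟩

lemma quantile_set_bddBelow (P : Measure ℝ) [IsProbabilityMeasure P] {β : ℝ} (hβ : 0 < β) :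
    BddBelow {t : ℝ | ENNReal.ofReal β ≤ P (Set.Iic t)} := by
  by_contra h
  have hall : ∀ r : ℝ, ENNReal.ofReal β ≤ P (Set.Iic r) := by
    intro r
    obtain ⟨t, ht, hlt⟩ := not_bddBelow_iff.mp h r
    exact le_trans ht (measure_mono (Set.Iic_subset_Iic.mpr hlt.le))
  have hinter : (⋂ n : ℕ, Set.Iic (-(n : ℝ))) = ∅ := by
    ext x
    simp only [Set.mem_iInter, Set.mem_Iic, Set.mem_empty_iff_false, iff_false, not_forall, not_le]
    obtain ⟨n, hn⟩ := exists_nat_gt (-x)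
    exact ⟨n, by linarith⟩
  have hinf : (⨅ n : ℕ, P (Set.Iic (-(n : ℝ)))) = P (⋂ n : ℕ, Set.Iic (-(n : ℝ))) := by
    rw [Directed.measure_iInter]
    · exact fun n => measurableSet_Iic.nullMeasurableSet
    · exact Antitone.directed_ge fun m n hmn =>
        Set.Iic_subset_Iic.mpr (by simp; exact_mod_cast hmn)
    · exact ⟨0, measure_ne_top _ _⟩
  have : ENNReal.ofReal β ≤ 0 := by
    have h0 : (⨅ n : ℕ, P (Set.Iic (-(n : ℝ)))) = 0 := by
      rw [hinf, hinter, measure_empty]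
    rw [← h0]
    exact le_iInf fun n => hall _
  exact absurd this (by simpa using (ENNReal.ofReal_pos.mpr hβ).ne')

lemma measure_Iic_quantile (P : Measure ℝ) [IsProbabilityMeasure P] {β : ℝ}
    (hβ0 : 0 < β) (hβ1 : β < 1) :
    ENNReal.ofReal β ≤ P (Set.Iic (quantile P β)) := by
  have hne := quantile_set_nonempty P hβ1
  have hbdd := quantile_set_bddBelow P hβ0
  have hmem : ∀ n : ℕ, ENNReal.ofReal β ≤ P (Set.Iic (quantile P β + 1 / (n + 1))) := by
    intro n
    have hpos : (0 : ℝ) < 1 / (n + 1) := by positivity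
    have : sInf {t : ℝ | ENNReal.ofReal β ≤ P (Set.Iic t)} < quantile P β + 1 / (n + 1) :=
      lt_of_le_of_lt le_rfl (by unfold quantile; linarith [lt_add_of_pos_right (quantile P β) hpos])
    obtain ⟨t, htS, htlt⟩ := (csInf_lt_iff hbdd hne).mp this
    exact le_trans htS (measure_mono (Set.Iic_subset_Iic.mpr htlt.le))
  have hIic : Set.Iic (quantile P β) = ⋂ n : ℕ, Set.Iic (quantile P β + 1 / (n + 1)) := by
    ext x
    simp only [Set.mem_Iic, Set.mem_iInter]
    constructor
    · intro hx n
      have : (0:ℝ) < 1 / (n+1) := by positivity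
      linarith
    · intro hx
      by_contra hlt
      push_neg at hlt
      obtain ⟨n, hn⟩ := exists_nat_one_div_lt (show (0:ℝ) < x - quantile P β by linarith)
      have := hx n
      linarith
  rw [hIic, Directed.measure_iInter]
  · exact le_iInf hmem
  · exact fun n => measurableSet_Iic.nullMeasurableSet
  case hfin => exact ⟨0, measure_ne_top _ _⟩
  · refine Antitone.directed_ge fun m n hmn => Set.Iic_subset_Iic.mpr ?_
    have : (1:ℝ) / (n + 1) ≤ 1 / (m + 1) := by
      apply one_div_le_one_div_of_le (by positivity)
      exact_mod_cast add_le_add_left (Nat.cast_le.mpr hmn) 1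
    linarith

lemma lt_quantile_not_mem (P : Measure ℝ) [IsProbabilityMeasure P] {β t : ℝ}
    (hβ0 : 0 < β) (ht : t < quantile P β) :
    ¬ ENNReal.ofReal β ≤ P (Set.Iic t) := fun h =>
  absurd (csInf_le (quantile_set_bddBelow P hβ0) h) (not_le.mpr ht)

lemma map_div_Iic (P : Measure ℝ) {c : ℝ} (hc : 0 < c) (t : ℝ) :
    P.map (fun v => v / c) (Set.Iic t) = P (Set.Iic (t * c)) := by
  rw [Measure.map_apply (measurable_div_const c) measurableSet_Iic]
  congr 1
  ext v
  simp [Set.mem_Iic, div_le_iff₀ hc]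

/-- For the multiplicatively rectified score
`Ṽ(x,y) = V(x,y) / τ⋆(x)` with `τ⋆(x) = Q_{1-α}(P_{V|X=x}) > 0`, the marginal
`(1-α)`-quantile of `Ṽ(X,Y)` equals `1`, and for `P_X`-a.e. `x` the conditional
`(1-α)`-quantile of `Ṽ(X,Y)` given `X = x` also equals `1`. -/
theorem rectified_score_linear_quantile
    {Ω : Type*} [MeasurableSpace Ω]
    (μ : Measure Ω) [IsProbabilityMeasure μ]
    {p d : ℕ}
    (X : Ω → (Fin p → ℝ)) (Y : Ω → (Fin d → ℝ))
    (hX : Measurable X) (hY : Measurable Y)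
    (V : (Fin p → ℝ) → (Fin d → ℝ) → ℝ)
    (hV : Measurable (Function.uncurry V))
    (α : ℝ) (hα : α ∈ Set.Ioo (0 : ℝ) 1)
    -- `τ⋆(x) = Q_{1-α}(P_{V | X = x})`, measurable and positive
    (τstar : (Fin p → ℝ) → ℝ)
    (hτstar_def : ∀ x, τstar x =
      quantile (condDistrib (fun ω => V (X ω) (Y ω)) X μ x) (1 - α))
    (hτstar_meas : Measurable τstar)
    (hτstar_pos : ∀ x, 0 < τstar x) :
    quantile (μ.map (fun ω => V (X ω) (Y ω) / τstar (X ω))) (1 - α) = 1 ∧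
    ∀ᵐ x ∂(μ.map X),
      quantile (condDistrib (fun ω => V (X ω) (Y ω) / τstar (X ω)) X μ x) (1 - α) = 1 := by
  obtain ⟨hα0, hα1⟩ := hα
  have hβ0 : (0:ℝ) < 1 - α := by linarith
  have hβ1 : (1:ℝ) - α < 1 := by linarith
  have hWmeas : Measurable (fun ω => V (X ω) (Y ω)) := hV.comp (hX.prodMk hY)
  have hWtmeas : Measurable (fun ω => V (X ω) (Y ω) / τstar (X ω)) :=
    hWmeas.div (hτstar_meas.comp hX)
  haveI : IsProbabilityMeasure (μ.map X) := Measure.isProbabilityMeasure_map hX.aemeasurable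
  set κ : Kernel (Fin p → ℝ) ℝ := condDistrib (fun ω => V (X ω) (Y ω)) X μ with hκ
  -- the rectified kernel
  have hgmeas : Measurable (fun q : (Fin p → ℝ) × ℝ => q.2 / τstar q.1) :=
    measurable_snd.div (hτstar_meas.comp measurable_fst)
  set κt : Kernel (Fin p → ℝ) ℝ :=
    Kernel.map ((Kernel.deterministic id measurable_id) ×ₖ κ)
      (fun q : (Fin p → ℝ) × ℝ => q.2 / τstar q.1) with hκt
  have hκt_apply : ∀ x, κt x = (κ x).map (fun v => v / τstar x) := by
    intro x
    rw [hκt, Kernel.map_apply _ hgmeas, Kernel.prod_apply, Kernel.deterministic_apply,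
      id_eq, Measure.dirac_prod, Measure.map_map hgmeas measurable_prodMk_left]
    rfl
  haveI : IsMarkovKernel κt := by
    constructor
    intro x
    rw [hκt_apply x]
    exact Measure.isProbabilityMeasure_map (measurable_div_const (τstar x)).aemeasurable
  -- disintegration of (X, V)
  have hdis : μ.map (fun ω => (X ω, V (X ω) (Y ω))) = (μ.map X) ⊗ₘ κ := by
    rw [hκ, condDistrib, ← Measure.fst_map_prodMk (X := X) hWmeas,
      Measure.disintegrate]
  -- disintegration of (X, Ṽ)
  have hmap : μ.map (fun ω => (X ω, V (X ω) (Y ω) / τstar (X ω))) = (μ.map X) ⊗ₘ κt := by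
    have hF : Measurable (fun q : (Fin p → ℝ) × ℝ => (q.1, q.2 / τstar q.1)) :=
      measurable_fst.prodMk hgmeas
    have h1 : (fun ω => (X ω, V (X ω) (Y ω) / τstar (X ω)))
        = (fun q : (Fin p → ℝ) × ℝ => (q.1, q.2 / τstar q.1))
          ∘ (fun ω => (X ω, V (X ω) (Y ω))) := rfl
    rw [h1, ← Measure.map_map hF (hX.prodMk hWmeas), hdis]
    ext s hs
    rw [Measure.map_apply hF hs, Measure.compProd_apply (hF hs), Measure.compProd_apply hs]
    refine lintegral_congr fun x => ?_
    rw [hκt_apply x, Measure.map_apply (measurable_div_const (τstar x))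
      (measurable_prodMk_left hs)]
    rfl
  have huniq : ∀ᵐ x ∂(μ.map X),
      κt x = condDistrib (fun ω => V (X ω) (Y ω) / τstar (X ω)) X μ x :=
    (condDistrib_ae_eq_of_measure_eq_compProd_of_measurable hX hWtmeas hmap).mono fun x h => h.symm
  -- pointwise conditional quantile of the rectified score
  have hq : ∀ x, quantile ((κ x).map (fun v => v / τstar x)) (1 - α) = 1 := by
    intro x
    haveI : IsProbabilityMeasure (κ x) := inferInstance
    have hIic : ∀ t : ℝ, ((κ x).map (fun v => v / τstar x)) (Set.Iic t)
        = κ x (Set.Iic (t * τstar x)) := fun t => map_div_Iic (κ x) (hτstar_pos x) t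
    have h1mem : ENNReal.ofReal (1 - α)
        ≤ ((κ x).map (fun v => v / τstar x)) (Set.Iic 1) := by
      rw [hIic, one_mul, hτstar_def x]
      exact measure_Iic_quantile _ hβ0 hβ1
    have hlb : ∀ t ∈ {t : ℝ | ENNReal.ofReal (1 - α)
        ≤ ((κ x).map (fun v => v / τstar x)) (Set.Iic t)}, (1:ℝ) ≤ t := by
      intro t ht
      by_contra hlt
      push_neg at hlt
      rw [Set.mem_setOf_eq, hIic] at ht
      refine lt_quantile_not_mem (κ x) hβ0 ?_ ht
      calc t * τstar x < 1 * τstar x := by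
            exact mul_lt_mul_of_pos_right hlt (hτstar_pos x)
        _ = τstar x := one_mul _
        _ = quantile (κ x) (1 - α) := hτstar_def x
    exact le_antisymm (csInf_le ⟨1, hlb⟩ h1mem) (le_csInf ⟨1, h1mem⟩ hlb)
  constructor
  · -- marginal part
    have hmarg : ∀ t : ℝ, μ.map (fun ω => V (X ω) (Y ω) / τstar (X ω)) (Set.Iic t)
        = ∫⁻ x, κ x (Set.Iic (t * τstar x)) ∂(μ.map X) := by
      intro t
      have hpre : (fun ω => V (X ω) (Y ω) / τstar (X ω)) ⁻¹' (Set.Iic t)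
          = (fun ω => (X ω, V (X ω) (Y ω) / τstar (X ω))) ⁻¹' (Set.univ ×ˢ Set.Iic t) := by
        ext ω; simp
      rw [Measure.map_apply hWtmeas measurableSet_Iic, hpre,
        ← Measure.map_apply (hX.prodMk hWtmeas) (MeasurableSet.univ.prod measurableSet_Iic),
        hmap, Measure.compProd_apply (MeasurableSet.univ.prod measurableSet_Iic)]
      refine lintegral_congr fun x => ?_
      have : (Prod.mk x ⁻¹' (Set.univ ×ˢ Set.Iic t)) = Set.Iic t := by ext v; simp
      rw [this, hκt_apply x, map_div_Iic (κ x) (hτstar_pos x) t]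
    have h1mem : ENNReal.ofReal (1 - α)
        ≤ μ.map (fun ω => V (X ω) (Y ω) / τstar (X ω)) (Set.Iic 1) := by
      rw [hmarg]
      have hle : ∀ x, ENNReal.ofReal (1 - α) ≤ κ x (Set.Iic (1 * τstar x)) := by
        intro x
        haveI : IsProbabilityMeasure (κ x) := inferInstance
        rw [one_mul, hτstar_def x]
        exact measure_Iic_quantile _ hβ0 hβ1
      calc ENNReal.ofReal (1 - α)
          = ∫⁻ _, ENNReal.ofReal (1 - α) ∂(μ.map X) := by simp
        _ ≤ _ := lintegral_mono fun x => hle x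
    have hlb : ∀ t ∈ {t : ℝ | ENNReal.ofReal (1 - α)
        ≤ μ.map (fun ω => V (X ω) (Y ω) / τstar (X ω)) (Set.Iic t)}, (1:ℝ) ≤ t := by
      intro t ht
      by_contra hlt
      push_neg at hlt
      rw [Set.mem_setOf_eq, hmarg] at ht
      -- f x := κ x (Iic (t * τstar x)) < c everywhere, yet ∫ f ≥ c : contradiction
      set c : ENNReal := ENNReal.ofReal (1 - α) with hc
      set f : (Fin p → ℝ) → ENNReal := fun x => κ x (Set.Iic (t * τstar x)) with hf
      have hflt : ∀ x, f x < c := by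
        intro x
        haveI : IsProbabilityMeasure (κ x) := inferInstance
        have hnot : ¬ c ≤ f x := by
          refine lt_quantile_not_mem (κ x) hβ0 ?_
          calc t * τstar x < 1 * τstar x := mul_lt_mul_of_pos_right hlt (hτstar_pos x)
            _ = τstar x := one_mul _
            _ = quantile (κ x) (1 - α) := hτstar_def x
        exact not_le.mp hnot
      have hfmeas : Measurable f := by
        have hs : MeasurableSet {q : (Fin p → ℝ) × ℝ | q.2 ≤ t * τstar q.1} :=
          measurableSet_le measurable_snd ((hτstar_meas.comp measurable_fst).const_mul t)
        exact Kernel.measurable_kernel_prodMk_left (κ := κ) hs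
      have hfle : ∀ x, f x ≤ c := fun x => (hflt x).le
      have hint_le : ∫⁻ x, f x ∂(μ.map X) ≤ c := by
        calc ∫⁻ x, f x ∂(μ.map X) ≤ ∫⁻ _, c ∂(μ.map X) := lintegral_mono hfle
          _ = c := by simp
      have heq : ∫⁻ x, f x ∂(μ.map X) = c := le_antisymm hint_le ht
      have hsub : ∫⁻ x, (c - f x) ∂(μ.map X) = 0 := by
        rw [lintegral_sub hfmeas (by rw [heq]; exact ENNReal.ofReal_ne_top)
          (Filter.Eventually.of_forall hfle)]
        simp [heq]
      have hae : ∀ᵐ x ∂(μ.map X), c - f x = 0 :=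
        (lintegral_eq_zero_iff (measurable_const.sub hfmeas)).mp hsub
      haveI : (ae (μ.map X)).NeBot := ae_neBot.mpr (IsProbabilityMeasure.ne_zero _)
      obtain ⟨x, hx⟩ := hae.exists
      have : c ≤ f x := tsub_eq_zero_iff_le.mp hx
      exact absurd this (not_le.mpr (hflt x))
    exact le_antisymm (csInf_le ⟨1, hlb⟩ h1mem) (le_csInf ⟨1, h1mem⟩ hlb)
  · filter_upwards [huniq] with x hx
    rw [← hx, hκt_apply x]
    exact hq x
end

section
/- (Maximal inequality for weighted Rademacher sums.) Let ε_1,…,ε_m be i.i.d. Rademacher random variables taking values in {−1,1} with equal probability, let p_1,…,p_m ∈ ℝ, and let θ > 0. Then E[exp(θ · max_{0 ≤ i ≤ m} Σ_{j=1}^{i} p_j ε_j)] ≤ 2 · Π_{k=1}^{m} cosh(θ p_k), where by convention the empty sum (i = 0) equals 0. -/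
open Finset

noncomputable section
namespace WRMI

def sg (b : Bool) : ℝ := if b then 1 else -1

lemma sg_true : sg true = 1 := rfl
lemma sg_false : sg false = -1 := rfl

def Mx (m : ℕ) (p : Fin m → ℝ) (s : Fin m → Bool) : ℝ :=
  (Finset.range (m + 1)).sup' (Finset.nonempty_range_iff.mpr (Nat.succ_ne_zero m))
    (fun i => ∑ j ∈ Finset.univ.filter (fun j : Fin m => (j : ℕ) < i), p j * sg (s j))

def Sm (m : ℕ) (p : Fin m → ℝ) (s : Fin m → Bool) : ℝ :=
  ∑ j, p j * sg (s j)

lemma Sm_cons (m : ℕ) (p : Fin (m+1) → ℝ) (b : Bool) (t : Fin m → Bool) :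
    Sm (m+1) p (Fin.cons b t) = p 0 * sg b + Sm m (Fin.tail p) t := by
  simp [Sm, Fin.sum_univ_succ, Fin.tail]

lemma sup'_range_succ (n : ℕ) (hn : (Finset.range n).Nonempty) (f : ℕ → ℝ) :
    (Finset.range (n+1)).sup' (Finset.nonempty_range_iff.mpr (Nat.succ_ne_zero n)) f
      = max (f 0) ((Finset.range n).sup' hn (fun i => f (i+1))) := by
  apply le_antisymm
  · apply Finset.sup'_le
    intro i hi
    cases i with
    | zero => exact le_max_left _ _
    | succ k =>
      refine le_trans ?_ (le_max_right _ _)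
      exact Finset.le_sup' (fun i => f (i+1)) (by simpa using Nat.lt_of_succ_lt_succ (Finset.mem_range.mp hi))
  · apply max_le
    · exact Finset.le_sup' f (by simp)
    · apply Finset.sup'_le
      intro i hi
      exact Finset.le_sup' f (by simpa using Nat.succ_lt_succ (Finset.mem_range.mp hi))

lemma Mx_nonneg (m : ℕ) (p : Fin m → ℝ) (s : Fin m → Bool) : 0 ≤ Mx m p s := by
  have h0 : (0:ℕ) ∈ Finset.range (m+1) := by simp
  have h := Finset.le_sup'
    (f := fun i => ∑ j ∈ Finset.univ.filter (fun j : Fin m => (j : ℕ) < i), p j * sg (s j)) h0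
  rw [Mx]
  refine le_trans ?_ h
  simp

lemma Mx_cons (m : ℕ) (p : Fin (m+1) → ℝ) (b : Bool) (t : Fin m → Bool) :
    Mx (m+1) p (Fin.cons b t) = max 0 (p 0 * sg b + Mx m (Fin.tail p) t) := by
  have hfs : ∀ i : ℕ,
      (∑ j ∈ Finset.univ.filter (fun j : Fin (m+1) => (j : ℕ) < i + 1),
        p j * sg ((Fin.cons b t : Fin (m+1) → Bool) j))
      = p 0 * sg b + ∑ j ∈ Finset.univ.filter (fun j : Fin m => (j : ℕ) < i),
          Fin.tail p j * sg (t j) := by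
    intro i
    rw [Finset.sum_filter, Finset.sum_filter, Fin.sum_univ_succ]
    simp [Fin.tail, Nat.succ_lt_succ_iff]
  unfold Mx
  rw [sup'_range_succ (m+1) (Finset.nonempty_range_iff.mpr (Nat.succ_ne_zero m))]
  have hzero : (∑ j ∈ Finset.univ.filter (fun j : Fin (m+1) => (j : ℕ) < 0),
      p j * sg ((Fin.cons b t : Fin (m+1) → Bool) j)) = 0 := by
    simp
  rw [hzero]
  congr 1
  rw [Finset.sup'_congr (Finset.nonempty_range_iff.mpr (Nat.succ_ne_zero m)) rfl
      (fun i _ => hfs i)]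
  exact (map_finset_sup' (OrderIso.addLeft (p 0 * sg b)) _ _).symm

open Real in
lemma sum_pi_bool_succ (m : ℕ) (f : (Fin (m+1) → Bool) → ℝ) :
    ∑ s : Fin (m+1) → Bool, f s
      = ∑ t : Fin m → Bool, (f (Fin.cons true t) + f (Fin.cons false t)) := by
  rw [← (Fin.consEquiv (fun _ => Bool)).sum_comp f, Fintype.sum_prod_type, Fintype.sum_bool,
    ← Finset.sum_add_distrib]
  rfl

/-- pathwise comparison changing `max c 0` back to `c`. -/
lemma pathwise_c (θ c y : ℝ) (hθ : 0 ≤ θ) :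
    Real.exp (θ * max (max c 0) y) + Real.exp (θ * max (max c 0) (-y))
      - Real.exp (θ * max c 0)
    ≤ Real.exp (θ * max c y) + Real.exp (θ * max c (-y)) - Real.exp (θ * c) := by
  rcases le_total 0 c with hc | hc
  · rw [max_eq_left hc]
  · rw [max_eq_right hc]
    have key : ∀ z : ℝ, 0 ≤ z →
        Real.exp (θ * max 0 z) + Real.exp (θ * max 0 (-z)) - Real.exp (θ * 0)
        ≤ Real.exp (θ * max c z) + Real.exp (θ * max c (-z)) - Real.exp (θ * c) := by
      intro z hz
      rw [max_eq_right hz, max_eq_left (neg_nonpos.mpr hz), max_eq_right (le_trans hc hz)]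
      have h1 : Real.exp (θ * c) ≤ Real.exp (θ * max c (-z)) := by
        apply Real.exp_le_exp.mpr
        exact mul_le_mul_of_nonneg_left (le_max_left _ _) hθ
      simp only [mul_zero, Real.exp_zero]
      linarith
    rcases le_total 0 y with hy | hy
    · exact key y hy
    · have h := key (-y) (by linarith)
      rw [neg_neg] at h
      linarith

lemma max_shift (u x v : ℝ) : max u (x + v) = x + max (u - x) v := by
  rw [← max_add_add_left]
  congr 1
  ring

lemma core (θ : ℝ) (hθ : 0 ≤ θ) :
    ∀ (m : ℕ) (p : Fin m → ℝ) (c : ℝ),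
      ∑ s : Fin m → Bool, Real.exp (θ * max c (Mx m p s))
      ≤ (∑ s : Fin m → Bool,
          (Real.exp (θ * max c (Sm m p s)) + Real.exp (θ * max c (-Sm m p s))))
        - 2^m * Real.exp (θ * c) := by
  intro m
  induction m with
  | zero =>
    intro p c
    have h1 : ∀ s : Fin 0 → Bool, Mx 0 p s = 0 := by
      intro s; simp [Mx]
    have h2 : ∀ s : Fin 0 → Bool, Sm 0 p s = 0 := by
      intro s; simp [Sm]
    have hexp : Real.exp (θ * c) ≤ Real.exp (θ * max c 0) :=
      Real.exp_le_exp.mpr (mul_le_mul_of_nonneg_left (le_max_left _ _) hθ)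
    simp only [h1, h2, neg_zero, Finset.sum_const, Fintype.card_fun]
    simp only [Fintype.card_bool, Fintype.card_fin, pow_zero]
    simp
    linarith
  | succ m ih =>
    intro p c
    have hxf : p 0 * sg false = -(p 0 * sg true) := by simp [sg]
    set cp := max c 0 with hcp
    have hsplit : ∀ (b : Bool) (t : Fin m → Bool),
        Real.exp (θ * max c (Mx (m+1) p (Fin.cons b t)))
        = Real.exp (θ * (p 0 * sg b)) *
            Real.exp (θ * max (cp - p 0 * sg b) (Mx m (Fin.tail p) t)) := by
      intro b t
      rw [Mx_cons, ← max_assoc, ← hcp, max_shift, mul_add, Real.exp_add]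
    have hmerge : ∀ (u y : ℝ),
        Real.exp (θ * u) * Real.exp (θ * max (cp - u) y)
          = Real.exp (θ * max cp (u + y)) := by
      intro u y
      rw [← Real.exp_add, ← mul_add, max_shift]
    have hconst : ∀ (b : Bool),
        Real.exp (θ * (p 0 * sg b)) * Real.exp (θ * (cp - p 0 * sg b))
          = Real.exp (θ * cp) := by
      intro b
      rw [← Real.exp_add, ← mul_add]
      ring_nf
    have hIH : ∀ b : Bool,
        ∑ t : Fin m → Bool, Real.exp (θ * max (cp - p 0 * sg b) (Mx m (Fin.tail p) t))
        ≤ (∑ t : Fin m → Bool,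
            (Real.exp (θ * max (cp - p 0 * sg b) (Sm m (Fin.tail p) t))
              + Real.exp (θ * max (cp - p 0 * sg b) (-Sm m (Fin.tail p) t))))
          - 2^m * Real.exp (θ * (cp - p 0 * sg b)) :=
      fun b => ih (Fin.tail p) (cp - p 0 * sg b)
    have hcard : ∑ _s : Fin (m+1) → Bool, (1:ℝ) = 2^(m+1) := by
      simp [Fintype.card_fun]
    calc ∑ s : Fin (m+1) → Bool, Real.exp (θ * max c (Mx (m+1) p s))
        = ∑ t : Fin m → Bool,
            (Real.exp (θ * max c (Mx (m+1) p (Fin.cons true t)))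
              + Real.exp (θ * max c (Mx (m+1) p (Fin.cons false t)))) :=
          sum_pi_bool_succ m _
      _ = Real.exp (θ * (p 0 * sg true)) *
            (∑ t : Fin m → Bool, Real.exp (θ * max (cp - p 0 * sg true) (Mx m (Fin.tail p) t)))
          + Real.exp (θ * (p 0 * sg false)) *
            (∑ t : Fin m → Bool, Real.exp (θ * max (cp - p 0 * sg false) (Mx m (Fin.tail p) t))) := by
          rw [Finset.sum_add_distrib, Finset.mul_sum, Finset.mul_sum]
          congr 1 <;> apply Finset.sum_congr rfl <;> intro t _ <;> rw [hsplit]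
      _ ≤ Real.exp (θ * (p 0 * sg true)) *
            ((∑ t : Fin m → Bool,
              (Real.exp (θ * max (cp - p 0 * sg true) (Sm m (Fin.tail p) t))
                + Real.exp (θ * max (cp - p 0 * sg true) (-Sm m (Fin.tail p) t))))
              - 2^m * Real.exp (θ * (cp - p 0 * sg true)))
          + Real.exp (θ * (p 0 * sg false)) *
            ((∑ t : Fin m → Bool,
              (Real.exp (θ * max (cp - p 0 * sg false) (Sm m (Fin.tail p) t))
                + Real.exp (θ * max (cp - p 0 * sg false) (-Sm m (Fin.tail p) t))))
              - 2^m * Real.exp (θ * (cp - p 0 * sg false))) := by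
          apply add_le_add <;>
            exact mul_le_mul_of_nonneg_left (hIH _) (Real.exp_nonneg _)
      _ = (∑ t : Fin m → Bool,
            ((Real.exp (θ * max cp (p 0 * sg true + Sm m (Fin.tail p) t))
              + Real.exp (θ * max cp (p 0 * sg true + -Sm m (Fin.tail p) t)))
            + (Real.exp (θ * max cp (p 0 * sg false + Sm m (Fin.tail p) t))
              + Real.exp (θ * max cp (p 0 * sg false + -Sm m (Fin.tail p) t)))))
          - 2^(m+1) * Real.exp (θ * cp) := by
          have e1 : ∀ (b : Bool) (t : Fin m → Bool),
              Real.exp (θ * (p 0 * sg b)) *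
                (Real.exp (θ * max (cp - p 0 * sg b) (Sm m (Fin.tail p) t))
                  + Real.exp (θ * max (cp - p 0 * sg b) (-Sm m (Fin.tail p) t)))
              = Real.exp (θ * max cp (p 0 * sg b + Sm m (Fin.tail p) t))
                + Real.exp (θ * max cp (p 0 * sg b + -Sm m (Fin.tail p) t)) := by
            intro b t
            rw [mul_add, hmerge, hmerge]
          have e2 : ∀ b : Bool,
              Real.exp (θ * (p 0 * sg b)) *
                ((∑ t : Fin m → Bool,
                  (Real.exp (θ * max (cp - p 0 * sg b) (Sm m (Fin.tail p) t))
                    + Real.exp (θ * max (cp - p 0 * sg b) (-Sm m (Fin.tail p) t))))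
                  - 2^m * Real.exp (θ * (cp - p 0 * sg b)))
              = (∑ t : Fin m → Bool,
                  (Real.exp (θ * max cp (p 0 * sg b + Sm m (Fin.tail p) t))
                    + Real.exp (θ * max cp (p 0 * sg b + -Sm m (Fin.tail p) t))))
                  - 2^m * Real.exp (θ * cp) := by
            intro b
            rw [mul_sub, Finset.mul_sum]
            congr 1
            · exact Finset.sum_congr rfl (fun t _ => e1 b t)
            · rw [← mul_assoc, mul_comm (Real.exp (θ * (p 0 * sg b))) ((2:ℝ)^m),
                mul_assoc, hconst]
          rw [e2 true, e2 false]
          simp only [Finset.sum_add_distrib]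
          ring
      _ = (∑ s : Fin (m+1) → Bool,
            (Real.exp (θ * max cp (Sm (m+1) p s)) + Real.exp (θ * max cp (-Sm (m+1) p s))))
          - 2^(m+1) * Real.exp (θ * cp) := by
          congr 1
          rw [sum_pi_bool_succ m
            (fun s => Real.exp (θ * max cp (Sm (m+1) p s)) + Real.exp (θ * max cp (-Sm (m+1) p s)))]
          apply Finset.sum_congr rfl
          intro t _
          rw [Sm_cons, Sm_cons, hxf]
          ring_nf
      _ ≤ (∑ s : Fin (m+1) → Bool,
            (Real.exp (θ * max c (Sm (m+1) p s)) + Real.exp (θ * max c (-Sm (m+1) p s))))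
          - 2^(m+1) * Real.exp (θ * c) := by
          have h := Finset.sum_le_sum
            (fun (s : Fin (m+1) → Bool) (_ : s ∈ Finset.univ) =>
              pathwise_c θ c (Sm (m+1) p s) hθ)
          rw [Finset.sum_sub_distrib, Finset.sum_sub_distrib] at h
          have hc1 : ∑ _s : Fin (m+1) → Bool, Real.exp (θ * cp) = 2^(m+1) * Real.exp (θ * cp) := by
            rw [Finset.sum_const, Finset.card_univ]
            simp [Fintype.card_fun]
          have hc2 : ∑ _s : Fin (m+1) → Bool, Real.exp (θ * c) = 2^(m+1) * Real.exp (θ * c) := by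
            rw [Finset.sum_const, Finset.card_univ]
            simp [Fintype.card_fun]
          rw [hc1, hc2] at h
          exact h


lemma sum_exp_S (θ : ℝ) : ∀ (m : ℕ) (p : Fin m → ℝ),
    ∑ s : Fin m → Bool, Real.exp (θ * Sm m p s)
      = ∏ j : Fin m, (Real.exp (θ * p j) + Real.exp (-(θ * p j))) := by
  intro m
  induction m with
  | zero => intro p; simp [Sm]
  | succ m ih =>
    intro p
    rw [sum_pi_bool_succ m (fun s => Real.exp (θ * Sm (m+1) p s))]
    have e1 : ∀ t : Fin m → Bool,
        Real.exp (θ * Sm (m+1) p (Fin.cons true t))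
          + Real.exp (θ * Sm (m+1) p (Fin.cons false t))
        = (Real.exp (θ * p 0) + Real.exp (-(θ * p 0)))
            * Real.exp (θ * Sm m (Fin.tail p) t) := by
      intro t
      rw [Sm_cons, Sm_cons, sg_true, sg_false]
      rw [mul_add, mul_add, Real.exp_add, Real.exp_add]
      ring_nf
    rw [Finset.sum_congr rfl (fun t _ => e1 t), ← Finset.mul_sum, ih (Fin.tail p),
      Fin.prod_univ_succ]
    rfl

lemma pathwise_zero (θ y : ℝ) :
    Real.exp (θ * max 0 y) + Real.exp (θ * max 0 (-y))
      ≤ Real.exp (θ * y) + Real.exp (-(θ * y)) + 1 := by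
  have key : ∀ z : ℝ, 0 ≤ z →
      Real.exp (θ * max 0 z) + Real.exp (θ * max 0 (-z))
        ≤ Real.exp (θ * z) + Real.exp (-(θ * z)) + 1 := by
    intro z hz
    rw [max_eq_right hz, max_eq_left (neg_nonpos.mpr hz), mul_zero, Real.exp_zero]
    have := Real.exp_nonneg (-(θ * z))
    linarith
  rcases le_total 0 y with hy | hy
  · exact key y hy
  · have h := key (-y) (by linarith)
    rw [neg_neg] at h
    rw [mul_neg, neg_neg] at h
    linarith

lemma final_comb (θ : ℝ) (hθ : 0 ≤ θ) (m : ℕ) (p : Fin m → ℝ) :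
    ∑ s : Fin m → Bool, Real.exp (θ * Mx m p s)
      ≤ 2^(m+1) * ∏ k : Fin m, Real.cosh (θ * p k) := by
  have h1 : ∀ s : Fin m → Bool, Mx m p s = max 0 (Mx m p s) :=
    fun s => (max_eq_right (Mx_nonneg m p s)).symm
  have h2 := core θ hθ m p 0
  rw [mul_zero, Real.exp_zero] at h2
  have h3 : ∑ s : Fin m → Bool,
      (Real.exp (θ * max 0 (Sm m p s)) + Real.exp (θ * max 0 (-Sm m p s)))
      ≤ ∑ s : Fin m → Bool,
        (Real.exp (θ * Sm m p s) + Real.exp (-(θ * Sm m p s)) + 1) :=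
    Finset.sum_le_sum (fun s _ => pathwise_zero θ (Sm m p s))
  have h4 : ∑ s : Fin m → Bool,
      (Real.exp (θ * Sm m p s) + Real.exp (-(θ * Sm m p s)) + 1)
      = ∑ s : Fin m → Bool, Real.exp (θ * Sm m p s)
        + ∑ s : Fin m → Bool, Real.exp ((-θ) * Sm m p s) + 2^m := by
    simp only [Finset.sum_add_distrib]
    congr 2
    · apply Finset.sum_congr rfl; intro s _; ring_nf
    · rw [Finset.sum_const, Finset.card_univ]
      simp [Fintype.card_fun]
  have h5 := sum_exp_S θ m p
  have h6 := sum_exp_S (-θ) m p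
  have h7 : ∏ j : Fin m, (Real.exp ((-θ) * p j) + Real.exp (-((-θ) * p j)))
      = ∏ j : Fin m, (Real.exp (θ * p j) + Real.exp (-(θ * p j))) := by
    apply Finset.prod_congr rfl; intro j _
    rw [neg_mul, neg_neg]
    ring
  have h8 : ∏ j : Fin m, (Real.exp (θ * p j) + Real.exp (-(θ * p j)))
      = 2^m * ∏ k : Fin m, Real.cosh (θ * p k) := by
    have : ∀ j : Fin m, Real.exp (θ * p j) + Real.exp (-(θ * p j))
        = 2 * Real.cosh (θ * p j) := by
      intro j; rw [Real.cosh_eq]; ring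
    rw [Finset.prod_congr rfl (fun j _ => this j), Finset.prod_mul_distrib,
      Finset.prod_const, Finset.card_univ, Fintype.card_fin]
  have hM : ∑ s : Fin m → Bool, Real.exp (θ * Mx m p s)
      = ∑ s : Fin m → Bool, Real.exp (θ * max 0 (Mx m p s)) := by
    apply Finset.sum_congr rfl; intro s _; rw [← h1]
  rw [hM]
  have hend : (2:ℝ)^(m+1) * ∏ k : Fin m, Real.cosh (θ * p k)
      = 2 * (2^m * ∏ k : Fin m, Real.cosh (θ * p k)) := by ring
  rw [hend, ← h8]
  have := h2.trans (by linarith [h3, h4, h5, h6] : 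
    (∑ s : Fin m → Bool,
      (Real.exp (θ * max 0 (Sm m p s)) + Real.exp (θ * max 0 (-Sm m p s))))
      - 2^m * 1
    ≤ 2 * ∏ j : Fin m, (Real.exp (θ * p j) + Real.exp (-(θ * p j))))
  exact this

end WRMI

open MeasureTheory ProbabilityTheory
open scoped ENNReal

/-- Maximal inequality for weighted Rademacher sums: if
`ε_1, …, ε_m` are i.i.d. Rademacher random variables, `p_1, …, p_m ∈ ℝ` and
`θ > 0`, then
`E[exp(θ · max_{0 ≤ i ≤ m} Σ_{j=1}^i p_j ε_j)] ≤ 2 ∏_{k=1}^m cosh(θ p_k)`. -/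
theorem weighted_rademacher_maximal_inequality
    {Ω : Type*} [MeasurableSpace Ω]
    (μ : Measure Ω) [IsProbabilityMeasure μ]
    (m : ℕ) (ε : Fin m → Ω → ℝ)
    (hε_meas : ∀ k, Measurable (ε k))
    (hε_indep : iIndepFun ε μ)
    (hε_law : ∀ k, μ.map (ε k) =
      (2⁻¹ : ℝ≥0∞) • (Measure.dirac (1 : ℝ) + Measure.dirac (-1 : ℝ)))
    (p : Fin m → ℝ) (θ : ℝ) (hθ : 0 < θ) :
    ∫ ω, Real.exp (θ *
        (Finset.range (m + 1)).sup' (Finset.nonempty_range_iff.mpr (Nat.succ_ne_zero m))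
          (fun i => ∑ j ∈ Finset.univ.filter (fun j : Fin m => (j : ℕ) < i),
            p j * ε j ω)) ∂μ ≤
      2 * ∏ k : Fin m, Real.cosh (θ * p k) := by
  classical
  set F : (Fin m → Bool) → ℝ := fun s => Real.exp (θ * WRMI.Mx m p s) with hF
  set E : (Fin m → Bool) → Set Ω := fun s => ⋂ i, ε i ⁻¹' {WRMI.sg (s i)} with hEdef
  have hEmeas : ∀ s, MeasurableSet (E s) := fun s =>
    MeasurableSet.iInter (fun i => (hε_meas i) (measurableSet_singleton _))
  -- single-point masses
  have hsingle : ∀ (i : Fin m) (x : ℝ), x = 1 ∨ x = -1 → μ (ε i ⁻¹' {x}) = 2⁻¹ := by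
    intro i x hx
    rw [← Measure.map_apply (hε_meas i) (measurableSet_singleton x), hε_law i]
    rcases hx with h | h <;> subst h <;>
      simp [Measure.smul_apply, Measure.add_apply,
        Measure.dirac_apply' _ (measurableSet_singleton _), Set.indicator_apply] <;>
      norm_num
  -- measure of each sign-pattern event
  have hE : ∀ s, μ (E s) = 2⁻¹ ^ m := by
    intro s
    have h := hε_indep.meas_iInter (s := fun i => ε i ⁻¹' {WRMI.sg (s i)})
      (fun i => ⟨{WRMI.sg (s i)}, measurableSet_singleton _, rfl⟩)
    rw [hEdef]
    rw [h]
    have : ∀ i : Fin m, μ (ε i ⁻¹' {WRMI.sg (s i)}) = 2⁻¹ := by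
      intro i
      apply hsingle
      cases hsi : s i
      · right; rw [WRMI.sg_false]
      · left; rw [WRMI.sg_true]
    rw [Finset.prod_congr rfl (fun i _ => this i), Finset.prod_const, Finset.card_univ,
      Fintype.card_fin]
  -- a.e., each ε i is ±1
  have hae : ∀ᵐ ω ∂μ, ∀ i, ε i ω = 1 ∨ ε i ω = -1 := by
    rw [MeasureTheory.ae_all_iff]
    intro i
    have hms : MeasurableSet ({(1:ℝ), -1} : Set ℝ) :=
      (measurableSet_singleton (-1:ℝ)).insert 1
    have hm : μ (ε i ⁻¹' ({(1:ℝ), -1}ᶜ)) = 0 := by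
      rw [← Measure.map_apply (hε_meas i) hms.compl, hε_law i]
      simp [Measure.smul_apply, Measure.add_apply, Measure.dirac_apply' _ hms.compl,
        Set.indicator_apply]
    rw [MeasureTheory.ae_iff]
    have hset : {ω | ¬(ε i ω = 1 ∨ ε i ω = -1)} = ε i ⁻¹' ({(1:ℝ), -1}ᶜ) := by
      ext ω; simp [Set.mem_preimage]
    rw [hset]
    exact hm
  -- integrand equals a finite sum of indicators a.e.
  have haeeq : (fun ω => Real.exp (θ *
        (Finset.range (m + 1)).sup' (Finset.nonempty_range_iff.mpr (Nat.succ_ne_zero m))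
          (fun i => ∑ j ∈ Finset.univ.filter (fun j : Fin m => (j : ℕ) < i),
            p j * ε j ω)))
      =ᵐ[μ] (fun ω => ∑ s : Fin m → Bool, (E s).indicator (fun _ => F s) ω) := by
    filter_upwards [hae] with ω hω
    set s₀ : Fin m → Bool := fun i => if ε i ω = 1 then true else false with hs₀
    have hsg : ∀ i, ε i ω = WRMI.sg (s₀ i) := by
      intro i
      rcases hω i with h | h
      · simp [hs₀, h, WRMI.sg]
      · have h1 : ¬ (ε i ω = 1) := by rw [h]; norm_num
        simp only [hs₀, h, WRMI.sg]
        norm_num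
    have hmem : ω ∈ E s₀ := by
      rw [hEdef]
      exact Set.mem_iInter.mpr (fun i => by simp [hsg i])
    have hLHS : Real.exp (θ *
        (Finset.range (m + 1)).sup' (Finset.nonempty_range_iff.mpr (Nat.succ_ne_zero m))
          (fun i => ∑ j ∈ Finset.univ.filter (fun j : Fin m => (j : ℕ) < i),
            p j * ε j ω)) = F s₀ := by
      rw [hF]
      show _ = Real.exp (θ * WRMI.Mx m p s₀)
      unfold WRMI.Mx
      have hsup : (Finset.range (m + 1)).sup'
            (Finset.nonempty_range_iff.mpr (Nat.succ_ne_zero m))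
            (fun i => ∑ j ∈ Finset.univ.filter (fun j : Fin m => (j : ℕ) < i),
              p j * ε j ω)
          = (Finset.range (m + 1)).sup'
            (Finset.nonempty_range_iff.mpr (Nat.succ_ne_zero m))
            (fun i => ∑ j ∈ Finset.univ.filter (fun j : Fin m => (j : ℕ) < i),
              p j * WRMI.sg (s₀ j)) :=
        Finset.sup'_congr _ rfl
          (fun i _ => Finset.sum_congr rfl (fun j _ => by rw [hsg j]))
      rw [hsup]
    rw [hLHS, Finset.sum_eq_single s₀]
    · rw [Set.indicator_of_mem hmem]
    · intro s _ hne
      apply Set.indicator_of_notMem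
      intro hmem'
      apply hne
      funext i
      have hi : ε i ω = WRMI.sg (s i) := by
        have := Set.mem_iInter.mp hmem' i
        simpa using this
      have heq : WRMI.sg (s i) = WRMI.sg (s₀ i) := by rw [← hi, hsg i]
      cases hsi : s i <;> cases hsi0 : s₀ i <;>
        rw [hsi, hsi0] at heq <;>
        simp [WRMI.sg] at heq <;> norm_num at heq
    · intro h; exact absurd (Finset.mem_univ s₀) h
  rw [MeasureTheory.integral_congr_ae haeeq,
    MeasureTheory.integral_finset_sum _
      (fun s _ => (MeasureTheory.integrable_const (F s)).indicator (hEmeas s))]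
  have hint : ∀ s : Fin m → Bool,
      ∫ ω, (E s).indicator (fun _ => F s) ω ∂μ = ((1:ℝ)/2)^m * F s := by
    intro s
    rw [MeasureTheory.integral_indicator_const (F s) (hEmeas s), measureReal_def, hE s, smul_eq_mul]
    congr 1
    rw [ENNReal.toReal_pow]
    norm_num
  rw [Finset.sum_congr rfl (fun s _ => hint s), ← Finset.mul_sum]
  have hb := WRMI.final_comb θ (le_of_lt hθ) m p
  have hFb : ∑ s : Fin m → Bool, F s ≤ 2^(m+1) * ∏ k : Fin m, Real.cosh (θ * p k) := by
    rw [hF]; exact hb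
  have hpos : (0:ℝ) ≤ ((1:ℝ)/2)^m := by positivity
  have h2m : ((1:ℝ)/2)^m * 2^(m+1) = 2 := by
    rw [one_div, inv_pow, pow_succ, ← mul_assoc,
      inv_mul_cancel₀ (by positivity : (2:ℝ)^m ≠ 0)]
    ring
  calc ((1:ℝ)/2)^m * ∑ s : Fin m → Bool, F s
      ≤ ((1:ℝ)/2)^m * (2^(m+1) * ∏ k : Fin m, Real.cosh (θ * p k)) :=
        mul_le_mul_of_nonneg_left hFb hpos
    _ = 2 * ∏ k : Fin m, Real.cosh (θ * p k) := by
        rw [← mul_assoc, h2m]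
end
end

section
/- (Bias control for kernel-weighted conditional c.d.f.s.) Let X_1,…,X_m be i.i.d. copies of X, a random vector in ℝ^d with density f_X. Fix x ∈ ℝ^d and h > 0, set w̃_k(x) := K_h(‖x − X_k‖), and let F(v | x̃) := P(V_φ(X,Y) ≤ v | X = x̃). Assume there is M ≥ 0 such that for every v ∈ ℝ the map x̃ ↦ F(v | x̃) is M-Lipschitz, and that t ↦ K_h(t) is non-increasing on ℝ_+. Define F_X(t,x) := ∫_{S^{d−1}} f_X(x − tω) dσ(ω) (σ the surface measure on the unit sphere) and D_h(x) := h^{d−1} · ‖F_X(·,x)‖_∞ · ∫_0^∞ t^{d−1} K_1(t) dt, assumed finite. Then for every γ ∈ (0,1), with probability at least 1 − γ, sup_{v∈ℝ} | Σ_{k=1}^{m} w̃_k(x) · ( F(v | X_k) − F(v | x) ) | ≤ m·D_h(x) + M·sup_{t≥0}{ t K_1(t) } · √( m·log(1/γ) / 2 ). -/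
open MeasureTheory ProbabilityTheory
open scoped NNReal ENNReal

section AuxHoeffding
open Real


private lemma aux_c_pos {p : ℝ} (hp0 : 0 ≤ p) (hp1 : p ≤ 1) (u : ℝ) :
    0 < 1 - p + p * Real.exp u := by
  rcases eq_or_lt_of_le hp1 with rfl | hlt
  · simpa using Real.exp_pos u
  · have : 0 ≤ p * Real.exp u := mul_nonneg hp0 (Real.exp_pos u).le
    linarith

private lemma aux_key_ineq {p : ℝ} (hp0 : 0 ≤ p) (hp1 : p ≤ 1) (u : ℝ) :
    Real.log (1 - p + p * Real.exp u) ≤ p * u + u ^ 2 / 8 := by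
  set c : ℝ → ℝ := fun u => 1 - p + p * Real.exp u with hc_def
  have hc : ∀ u, 0 < c u := aux_c_pos hp0 hp1
  set g : ℝ → ℝ := fun u => p * u + u ^ 2 / 8 - Real.log (c u) with hg_def
  set g' : ℝ → ℝ := fun u => p + u / 4 - p * Real.exp u / c u with hg'_def
  have hcd : ∀ u, HasDerivAt c (p * Real.exp u) u := by
    intro u
    exact ((Real.hasDerivAt_exp u).const_mul p).const_add (1 - p)
  have hgd : ∀ u, HasDerivAt g (g' u) u := by
    intro u
    have hlog : HasDerivAt (fun u => Real.log (c u)) (p * Real.exp u / c u) u :=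
      (hcd u).log (hc u).ne'
    have h1 : HasDerivAt (fun u : ℝ => p * u + u ^ 2 / 8) (p + 2 * u / 8) u := by
      simpa [Pi.add_def] using ((hasDerivAt_id u).const_mul p).add
        (((hasDerivAt_pow 2 u)).div_const 8)
    have := h1.sub hlog
    refine this.congr_deriv ?_
    simp only [hg'_def]
    ring_nf
  have hg'd : ∀ u, HasDerivAt g'
      (1 / 4 - (p * Real.exp u / c u - (p * Real.exp u / c u) ^ 2)) u := by
    intro u
    have hq : HasDerivAt (fun u => p * Real.exp u / c u)
        ((p * Real.exp u * c u - p * Real.exp u * (p * Real.exp u)) / (c u) ^ 2) u := by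
      exact ((Real.hasDerivAt_exp u).const_mul p).div (hcd u) (hc u).ne'
    have h1 : HasDerivAt (fun u : ℝ => p + u / 4) (1 / 4) u := by
      simpa using ((hasDerivAt_id u).div_const 4).const_add p
    have := h1.sub hq
    refine this.congr_deriv ?_
    have hcne := (hc u).ne'
    field_simp
  have hg'nonneg : ∀ u, 0 ≤ 1 / 4 - (p * Real.exp u / c u - (p * Real.exp u / c u) ^ 2) := by
    intro u
    set q := p * Real.exp u / c u
    nlinarith [sq_nonneg (q - 1 / 2)]
  have hg'mono : Monotone g' := by
    have : ∀ u, 0 ≤ deriv g' u := by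
      intro u
      rw [(hg'd u).deriv]
      exact hg'nonneg u
    exact monotone_of_deriv_nonneg (fun u => (hg'd u).differentiableAt) this
  have hg'0 : g' 0 = 0 := by
    simp only [hg'_def, hc_def]
    norm_num
  have hg0 : g 0 = 0 := by
    have : c 0 = 1 := by simp [hc_def]
    simp [hg_def, this]
  have hgcont : Continuous g := by
    have hcc : Continuous c := continuous_const.add (continuous_const.mul Real.continuous_exp)
    exact ((continuous_const.mul continuous_id).add
      ((continuous_pow 2).div_const 8)).sub (hcc.log fun u => (hc u).ne')
  have hgnonneg : ∀ u, 0 ≤ g u := by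
    intro u
    rcases le_or_gt 0 u with hu | hu
    · have hmono : MonotoneOn g (Set.Ici (0 : ℝ)) := by
        apply monotoneOn_of_deriv_nonneg (convex_Ici 0) (hgcont.continuousOn)
        · intro t _
          exact (hgd t).differentiableAt.differentiableWithinAt
        · intro t ht
          rw [(hgd t).deriv]
          have : (0 : ℝ) ≤ t := le_of_lt (by simpa using ht)
          calc (0 : ℝ) = g' 0 := hg'0.symm
            _ ≤ g' t := hg'mono this
      have := hmono (Set.self_mem_Ici) (Set.mem_Ici.2 hu) hu
      rwa [hg0] at this
    · have hanti : AntitoneOn g (Set.Iic (0 : ℝ)) := by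
        apply antitoneOn_of_deriv_nonpos (convex_Iic 0) (hgcont.continuousOn)
        · intro t _
          exact (hgd t).differentiableAt.differentiableWithinAt
        · intro t ht
          rw [(hgd t).deriv]
          have : t ≤ (0 : ℝ) := le_of_lt (by simpa using ht)
          calc g' t ≤ g' 0 := hg'mono this
            _ = 0 := hg'0
      have := hanti (Set.mem_Iic.2 hu.le) (Set.self_mem_Iic) hu.le
      rwa [hg0] at this
  have := hgnonneg u
  simp only [hg_def] at this
  linarith

private lemma aux_hoeffding_mgf {Ω : Type*} [MeasurableSpace Ω]
    (μ : Measure Ω) [IsProbabilityMeasure μ] (Y : Ω → ℝ) (hY : Measurable Y)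
    {a b : ℝ} (hab : ∀ ω, Y ω ∈ Set.Icc a b) (hmean : ∫ ω, Y ω ∂μ = 0) (t : ℝ) :
    ∫ ω, Real.exp (t * Y ω) ∂μ ≤ Real.exp (t ^ 2 * (b - a) ^ 2 / 8) := by
  have hYint : Integrable Y μ := by
    refine ⟨hY.aestronglyMeasurable, ?_⟩
    apply MeasureTheory.HasFiniteIntegral.of_bounded (C := max |a| |b|)
    filter_upwards with ω
    rcases hab ω with ⟨h1, h2⟩
    rw [Real.norm_eq_abs, abs_le]
    constructor
    · have h3 := neg_abs_le a
      have h4 := le_max_left |a| |b|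
      linarith
    · exact le_trans h2 (le_trans (le_abs_self b) (le_max_right _ _))
  have ha0 : a ≤ 0 := by
    have : ∫ ω, (a : ℝ) ∂μ ≤ ∫ ω, Y ω ∂μ :=
      integral_mono (integrable_const a) hYint (fun ω => (hab ω).1)
    simpa [hmean] using this
  have hb0 : 0 ≤ b := by
    have : ∫ ω, Y ω ∂μ ≤ ∫ ω, (b : ℝ) ∂μ :=
      integral_mono hYint (integrable_const b) (fun ω => (hab ω).2)
    simpa [hmean] using this
  rcases eq_or_lt_of_le (ha0.trans hb0) with hab' | hab'
  · -- a = b hence a = 0 = b, Y ≡ 0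
    have ha : a = 0 := le_antisymm ha0 (by linarith)
    have hb : b = 0 := by linarith
    have hYzero : ∀ ω, Y ω = 0 := fun ω =>
      le_antisymm (hb ▸ (hab ω).2) (ha ▸ (hab ω).1)
    simp only [hYzero, mul_zero, Real.exp_zero, integral_const, measure_univ,
      ENNReal.toReal_one, probReal_univ, smul_eq_mul, mul_one]
    exact Real.one_le_exp (by positivity)
  · set p : ℝ := -a / (b - a) with hp_def
    have hba : 0 < b - a := sub_pos.2 hab'
    have hp0 : 0 ≤ p := div_nonneg (by linarith) hba.le
    have hp1 : p ≤ 1 := by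
      rw [div_le_one hba]; linarith
    -- pointwise convexity bound
    have hpt : ∀ ω, Real.exp (t * Y ω) ≤
        (b - Y ω) / (b - a) * Real.exp (t * a) + (Y ω - a) / (b - a) * Real.exp (t * b) := by
      intro ω
      have h1 := (hab ω).1
      have h2 := (hab ω).2
      have hθ0 : 0 ≤ (b - Y ω) / (b - a) := div_nonneg (by linarith) hba.le
      have hθ0' : 0 ≤ (Y ω - a) / (b - a) := div_nonneg (by linarith) hba.le
      have hθ1 : (b - Y ω) / (b - a) + (Y ω - a) / (b - a) = 1 := by
        field_simp
        ring
      have := convexOn_exp.2 (Set.mem_univ (t * a)) (Set.mem_univ (t * b)) hθ0 hθ0' hθ1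
      simp only [smul_eq_mul] at this
      have harg : (b - Y ω) / (b - a) * (t * a) + (Y ω - a) / (b - a) * (t * b) = t * Y ω := by
        field_simp
        ring
      rwa [harg] at this
    -- integrate
    have hint1 : Integrable (fun ω => Real.exp (t * Y ω)) μ := by
      refine ⟨((hY.const_mul t).exp).aestronglyMeasurable, ?_⟩
      apply MeasureTheory.HasFiniteIntegral.of_bounded (C := Real.exp (|t| * (|a| + |b|)))
      filter_upwards with ω
      rw [Real.norm_eq_abs, Real.abs_exp, Real.exp_le_exp]
      calc t * Y ω ≤ |t * Y ω| := le_abs_self _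
        _ = |t| * |Y ω| := abs_mul _ _
        _ ≤ |t| * (|a| + |b|) := by
            apply mul_le_mul_of_nonneg_left _ (abs_nonneg t)
            rcases hab ω with ⟨h1, h2⟩
            rw [abs_le]; constructor
            · have := neg_abs_le a; linarith [abs_nonneg b]
            · have := le_abs_self b; linarith [abs_nonneg a]
    have hint2 : Integrable (fun ω =>
        (b - Y ω) / (b - a) * Real.exp (t * a) + (Y ω - a) / (b - a) * Real.exp (t * b)) μ := by
      apply Integrable.add
      · exact ((((integrable_const b).sub hYint).div_const _).mul_const _)
      · exact (((hYint.sub (integrable_const a)).div_const _).mul_const _)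
    have hI : ∫ ω, Real.exp (t * Y ω) ∂μ ≤
        (b * Real.exp (t * a) - a * Real.exp (t * b)) / (b - a) := by
      calc ∫ ω, Real.exp (t * Y ω) ∂μ ≤ ∫ ω,
            ((b - Y ω) / (b - a) * Real.exp (t * a)
              + (Y ω - a) / (b - a) * Real.exp (t * b)) ∂μ :=
          integral_mono hint1 hint2 hpt
        _ = (b * Real.exp (t * a) - a * Real.exp (t * b)) / (b - a) := by
            have e1 : Integrable (fun ω => (b - Y ω) / (b - a) * Real.exp (t * a)) μ := by
              apply Integrable.mul_const
              apply Integrable.div_const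
              exact (integrable_const b).sub hYint
            have e2 : Integrable (fun ω => (Y ω - a) / (b - a) * Real.exp (t * b)) μ := by
              apply Integrable.mul_const
              apply Integrable.div_const
              exact hYint.sub (integrable_const a)
            have e3 : Integrable (fun ω => (b - Y ω) / (b - a)) μ := by
              apply Integrable.div_const
              exact (integrable_const b).sub hYint
            have e4 : Integrable (fun ω => (Y ω - a) / (b - a)) μ := by
              apply Integrable.div_const
              exact hYint.sub (integrable_const a)
            have e5 : Integrable (fun ω => b - Y ω) μ := by
              exact (integrable_const b).sub hYint
            have e6 : Integrable (fun ω => Y ω - a) μ := by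
              exact hYint.sub (integrable_const a)
            rw [integral_add e1 e2,
              integral_mul_const, integral_mul_const, integral_div, integral_div,
              integral_sub (integrable_const b) hYint,
              integral_sub hYint (integrable_const a), hmean]
            simp only [integral_const, measure_univ, ENNReal.toReal_one, probReal_univ, smul_eq_mul, one_mul]
            field_simp
            ring
    refine hI.trans ?_
    -- now the analytic bound
    set u : ℝ := t * (b - a) with hu_def
    have key := aux_key_ineq hp0 hp1 u
    have hc_pos : 0 < 1 - p + p * Real.exp u := by
      rcases eq_or_lt_of_le hp1 with h | h
      · rw [← h]
        simp only [sub_self, zero_add, one_mul]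
        have := Real.exp_pos u
        nlinarith [Real.exp_pos u]

      · have : 0 ≤ p * Real.exp u := mul_nonneg hp0 (Real.exp_pos u).le
        linarith
    have heq : (b * Real.exp (t * a) - a * Real.exp (t * b)) / (b - a) =
        Real.exp (-p * u) * (1 - p + p * Real.exp u) := by
      have h1 : t * a = -p * u := by
        rw [hp_def, hu_def]; field_simp
      have hA : Real.exp (t * a) = Real.exp (-p * u) := by rw [h1]
      have hB : Real.exp (t * b) = Real.exp (-p * u) * Real.exp u := by
        rw [← Real.exp_add]
        congr 1
        rw [hp_def, hu_def]; field_simp; ring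
      rw [hA, hB, hp_def]
      field_simp
      ring
    rw [heq]
    have hlog : Real.exp (-p * u) * (1 - p + p * Real.exp u) =
        Real.exp (-p * u + Real.log (1 - p + p * Real.exp u)) := by
      rw [Real.exp_add, Real.exp_log hc_pos]
    rw [hlog, Real.exp_le_exp]
    have : u ^ 2 = t ^ 2 * (b - a) ^ 2 := by rw [hu_def]; ring
    linarith [key]

private lemma aux_hoeffding_tail {Ω : Type*} [MeasurableSpace Ω]
    (μ : Measure Ω) [IsProbabilityMeasure μ]
    {m : ℕ} (hm : 0 < m) (U : Fin m → Ω → ℝ) (hU_meas : ∀ k, Measurable (U k))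
    (hindep : iIndepFun U μ)
    {B : ℝ} (hB : 0 < B) (hUb : ∀ k ω, U k ω ∈ Set.Icc 0 B)
    {ε : ℝ} (hε : 0 < ε) :
    (μ {ω | ε ≤ ∑ k : Fin m, (U k ω - ∫ ω', U k ω' ∂μ)}).toReal ≤
      Real.exp (-2 * ε ^ 2 / (m * B ^ 2)) := by
  set c : Fin m → ℝ := fun k => ∫ ω', U k ω' ∂μ with hc_def
  set Y : Fin m → Ω → ℝ := fun k ω => U k ω - c k with hY_def
  have hUint : ∀ k, Integrable (U k) μ := by
    intro k
    refine ⟨(hU_meas k).aestronglyMeasurable, ?_⟩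
    apply MeasureTheory.HasFiniteIntegral.of_bounded (C := B)
    filter_upwards with ω
    rcases hUb k ω with ⟨h1, h2⟩
    rw [Real.norm_eq_abs, abs_le]
    exact ⟨by linarith, h2⟩
  have hc_mem : ∀ k, c k ∈ Set.Icc (0 : ℝ) B := by
    intro k
    constructor
    · exact integral_nonneg (fun ω => (hUb k ω).1)
    · calc (∫ ω', U k ω' ∂μ) ≤ ∫ ω', (B : ℝ) ∂μ :=
          integral_mono (hUint k) (integrable_const B) (fun ω => (hUb k ω).2)
        _ = B := by simp
  have hY_meas : ∀ k, Measurable (Y k) := fun k => (hU_meas k).sub measurable_const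
  have hY_mem : ∀ k ω, Y k ω ∈ Set.Icc (-c k) (B - c k) := by
    intro k ω
    rcases hUb k ω with ⟨h1, h2⟩
    exact ⟨by simp [hY_def]; linarith, by simp [hY_def]; linarith⟩
  have hY_mean : ∀ k, ∫ ω, Y k ω ∂μ = 0 := by
    intro k
    rw [hY_def]
    simp only
    rw [integral_sub (hUint k) (integrable_const _)]
    simp [hc_def]
  have hY_indep : iIndepFun Y μ := by
    have := hindep.comp (g := fun (k : Fin m) (y : ℝ) => y - c k)
      (fun k => measurable_id.sub measurable_const)
    exact this
  set t : ℝ := 4 * ε / (m * B ^ 2) with ht_def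
  have hmB : (0 : ℝ) < m * B ^ 2 := by positivity
  have ht : 0 < t := by positivity
  have hYbd : ∀ k ω, |Y k ω| ≤ B := by
    intro k ω
    rcases hY_mem k ω with ⟨h1, h2⟩
    rcases hc_mem k with ⟨h3, h4⟩
    rw [abs_le]
    constructor <;> linarith
  have hexp_int : ∀ k, Integrable (fun ω => Real.exp (t * Y k ω)) μ := by
    intro k
    refine ⟨((hY_meas k).const_mul t).exp.aestronglyMeasurable, ?_⟩
    apply MeasureTheory.HasFiniteIntegral.of_bounded (C := Real.exp (t * B))
    filter_upwards with ω
    rw [Real.norm_eq_abs, Real.abs_exp, Real.exp_le_exp]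
    calc t * Y k ω ≤ t * |Y k ω| := by
          apply mul_le_mul_of_nonneg_left (le_abs_self _) ht.le
      _ ≤ t * B := mul_le_mul_of_nonneg_left (hYbd k ω) ht.le
  have hS_int : Integrable (fun ω => Real.exp (t * (∑ k : Fin m, Y k) ω)) μ := by
    refine ⟨?_, ?_⟩
    · have : Measurable (∑ k : Fin m, Y k) := by
        have h2 := Finset.measurable_sum (f := Y) Finset.univ (fun k _ => hY_meas k)
        convert h2 using 1
        ext ω
        simp [Finset.sum_apply]
      exact ((this.const_mul t).exp).aestronglyMeasurable
    · apply MeasureTheory.HasFiniteIntegral.of_bounded (C := Real.exp (t * (m * B)))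
      filter_upwards with ω
      rw [Real.norm_eq_abs, Real.abs_exp, Real.exp_le_exp]
      have hsum : (∑ k : Fin m, Y k) ω ≤ m * B := by
        rw [Finset.sum_apply]
        calc ∑ k : Fin m, Y k ω ≤ ∑ k : Fin m, B :=
            Finset.sum_le_sum (fun k _ => (abs_le.1 (hYbd k ω)).2)
          _ = m * B := by simp [mul_comm]
      exact mul_le_mul_of_nonneg_left hsum ht.le
  have hchern := measure_ge_le_exp_mul_mgf (μ := μ) (X := ∑ k : Fin m, Y k) ε ht.le hS_int
  have hmgf : mgf (∑ k : Fin m, Y k) μ t ≤ Real.exp (m * (t ^ 2 * B ^ 2 / 8)) := by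
    rw [iIndepFun.mgf_sum hY_indep hY_meas]
    calc ∏ k : Fin m, mgf (Y k) μ t ≤ ∏ k : Fin m, Real.exp (t ^ 2 * B ^ 2 / 8) := by
          apply Finset.prod_le_prod
          · intro k _; exact mgf_nonneg
          · intro k _
            have := aux_hoeffding_mgf μ (Y k) (hY_meas k) (hY_mem k) (hY_mean k) t
            have heq : (B - c k - -c k) = B := by ring
            rw [mgf]
            calc μ[fun ω => Real.exp (t * Y k ω)] ≤
                Real.exp (t ^ 2 * (B - c k - -c k) ^ 2 / 8) := this
              _ = Real.exp (t ^ 2 * B ^ 2 / 8) := by rw [heq]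
      _ = Real.exp (m * (t ^ 2 * B ^ 2 / 8)) := by
          rw [Finset.prod_const, ← Real.exp_nat_mul]
          simp
  have hsetseq : {ω | ε ≤ ∑ k : Fin m, (U k ω - c k)} =
      {ω | ε ≤ (∑ k : Fin m, Y k) ω} := by
    ext ω
    simp [hY_def, Finset.sum_apply]
  rw [hc_def] at hsetseq
  rw [hsetseq]
  calc (μ {ω | ε ≤ (∑ k : Fin m, Y k) ω}).toReal ≤
      Real.exp (-t * ε) * mgf (∑ k : Fin m, Y k) μ t := hchern
    _ ≤ Real.exp (-t * ε) * Real.exp (m * (t ^ 2 * B ^ 2 / 8)) := by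
        apply mul_le_mul_of_nonneg_left hmgf (Real.exp_pos _).le
    _ = Real.exp (-t * ε + m * (t ^ 2 * B ^ 2 / 8)) := (Real.exp_add _ _).symm
    _ = Real.exp (-2 * ε ^ 2 / (m * B ^ 2)) := by
        congr 1
        rw [ht_def]
        field_simp
        ring

end AuxHoeffding

section AuxPolar
open MeasureTheory Set
private lemma aux_polar {d : ℕ} (hd : 1 ≤ d)
    (g : EuclideanSpace ℝ (Fin d) → ℝ≥0∞) (hg : Measurable g) :
    ∫⁻ y, g y ∂(volume : Measure (EuclideanSpace ℝ (Fin d))) =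
      ∫⁻ r in Set.Ioi (0 : ℝ), ENNReal.ofReal (r ^ (d - 1)) *
        ∫⁻ ω : Metric.sphere (0 : EuclideanSpace ℝ (Fin d)) 1,
          g (r • (ω : EuclideanSpace ℝ (Fin d)))
          ∂((volume : Measure (EuclideanSpace ℝ (Fin d))).toSphere) ∂volume := by
  haveI : Nonempty (Fin d) := Fin.pos_iff_nonempty.mp hd
  haveI : Nontrivial (EuclideanSpace ℝ (Fin d)) := by
    inhabit Fin d
    infer_instance
  have hdim : Module.finrank ℝ (EuclideanSpace ℝ (Fin d)) = d := finrank_euclideanSpace_fin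
  set F : Metric.sphere (0 : EuclideanSpace ℝ (Fin d)) 1 × Set.Ioi (0 : ℝ) → ℝ≥0∞ :=
    fun q => g ((q.2 : ℝ) • (q.1 : EuclideanSpace ℝ (Fin d))) with hF_def
  have hF_meas : Measurable F :=
    hg.comp ((measurable_subtype_coe.comp measurable_snd).smul
      (measurable_subtype_coe.comp measurable_fst))
  have step1 : ∫⁻ y, g y ∂(volume : Measure (EuclideanSpace ℝ (Fin d))) =
      ∫⁻ y in ({0}ᶜ : Set (EuclideanSpace ℝ (Fin d))), g y ∂volume := by
    rw [MeasureTheory.restrict_compl_singleton]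
  have step2 : ∫⁻ y in ({0}ᶜ : Set (EuclideanSpace ℝ (Fin d))), g y ∂volume =
      ∫⁻ p : ({0}ᶜ : Set (EuclideanSpace ℝ (Fin d))), g p
        ∂((volume : Measure (EuclideanSpace ℝ (Fin d))).comap Subtype.val) :=
    (lintegral_subtype_comap (measurableSet_singleton 0).compl _).symm
  have hmp := (volume : Measure (EuclideanSpace ℝ (Fin d))).measurePreserving_homeomorphUnitSphereProd
  have step3 : ∫⁻ p : ({0}ᶜ : Set (EuclideanSpace ℝ (Fin d))), g p
        ∂((volume : Measure (EuclideanSpace ℝ (Fin d))).comap Subtype.val) =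
      ∫⁻ q, F q ∂((volume : Measure (EuclideanSpace ℝ (Fin d))).toSphere.prod
        (Measure.volumeIoiPow (Module.finrank ℝ (EuclideanSpace ℝ (Fin d)) - 1))) := by
    rw [← hmp.lintegral_comp hF_meas]
    apply lintegral_congr
    intro p
    have h1 : (((homeomorphUnitSphereProd (EuclideanSpace ℝ (Fin d))).symm
        ((homeomorphUnitSphereProd (EuclideanSpace ℝ (Fin d))) p) :
          ({0}ᶜ : Set (EuclideanSpace ℝ (Fin d)))) : EuclideanSpace ℝ (Fin d)) = (p : _) := by
      rw [Homeomorph.symm_apply_apply]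
    conv_lhs => rw [← h1]
    rw [hF_def]
    simp only [homeomorphUnitSphereProd_symm_apply_coe, homeomorphUnitSphereProd_apply_fst_coe,
      homeomorphUnitSphereProd_apply_snd_coe]
  have step4 : ∫⁻ q, F q ∂((volume : Measure (EuclideanSpace ℝ (Fin d))).toSphere.prod
        (Measure.volumeIoiPow (Module.finrank ℝ (EuclideanSpace ℝ (Fin d)) - 1))) =
      ∫⁻ r : Set.Ioi (0 : ℝ), ∫⁻ ω : Metric.sphere (0 : EuclideanSpace ℝ (Fin d)) 1, F (ω, r)
        ∂(volume : Measure (EuclideanSpace ℝ (Fin d))).toSphere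
        ∂(Measure.volumeIoiPow (Module.finrank ℝ (EuclideanSpace ℝ (Fin d)) - 1)) :=
    lintegral_prod_symm F hF_meas.aemeasurable
  have step5 : ∫⁻ r : Set.Ioi (0 : ℝ),
        ∫⁻ ω : Metric.sphere (0 : EuclideanSpace ℝ (Fin d)) 1, F (ω, r)
        ∂(volume : Measure (EuclideanSpace ℝ (Fin d))).toSphere
        ∂(Measure.volumeIoiPow (Module.finrank ℝ (EuclideanSpace ℝ (Fin d)) - 1)) =
      ∫⁻ r : Set.Ioi (0 : ℝ), ENNReal.ofReal ((r : ℝ) ^ (d - 1)) *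
        (∫⁻ ω : Metric.sphere (0 : EuclideanSpace ℝ (Fin d)) 1, F (ω, r)
          ∂(volume : Measure (EuclideanSpace ℝ (Fin d))).toSphere)
        ∂((volume : Measure ℝ).comap Subtype.val) := by
    rw [Measure.volumeIoiPow, hdim]
    rw [lintegral_withDensity_eq_lintegral_mul _
      ((measurable_subtype_coe.pow_const _).ennreal_ofReal) ?_]
    · rfl
    · exact Measurable.lintegral_prod_left (f := fun ω r => F (ω, r)) hF_meas
  rw [step1, step2, step3, step4, step5]
  exact lintegral_subtype_comap measurableSet_Ioi
    (fun r : ℝ => ENNReal.ofReal (r ^ (d - 1)) *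
      ∫⁻ ω : Metric.sphere (0 : EuclideanSpace ℝ (Fin d)) 1, g (r • (ω : EuclideanSpace ℝ (Fin d)))
        ∂(volume : Measure (EuclideanSpace ℝ (Fin d))).toSphere)

private lemma aux_exp_bound {d : ℕ} (hd : 1 ≤ d)
    (fX : EuclideanSpace ℝ (Fin d) → ℝ) (hfX_meas : Measurable fX)
    (hfX_nonneg : ∀ x, 0 ≤ fX x)
    (hfX_mass : ∫⁻ z, ENNReal.ofReal (fX z) ∂(volume : Measure (EuclideanSpace ℝ (Fin d))) = 1)
    (K1 : ℝ → ℝ) (hK1_nonneg : ∀ t, 0 ≤ K1 t)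
    (h : ℝ) (hh : 0 < h) (hK1_anti : AntitoneOn K1 (Set.Ici (0 : ℝ)))
    (x : EuclideanSpace ℝ (Fin d))
    (FX : ℝ → ℝ)
    (hFX_def : ∀ t, FX t =
      ∫ ω : Metric.sphere (0 : EuclideanSpace ℝ (Fin d)) 1,
        fX (x - t • (ω : EuclideanSpace ℝ (Fin d)))
        ∂((volume : Measure (EuclideanSpace ℝ (Fin d))).toSphere))
    (hFX_bdd : BddAbove (Set.range FX))
    (hK1_mom : IntegrableOn (fun t => t ^ (d - 1) * K1 t) (Set.Ioi (0 : ℝ)))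
    (ψ : EuclideanSpace ℝ (Fin d) → ℝ) (hψ_meas : Measurable ψ)
    (hψ_nonneg : ∀ z, 0 ≤ ψ z)
    (hψ_le : ∀ z, ψ z ≤ h⁻¹ * K1 (‖x - z‖ / h)) :
    ∫⁻ z, ENNReal.ofReal (ψ z) * ENNReal.ofReal (fX z)
        ∂(volume : Measure (EuclideanSpace ℝ (Fin d))) ≤
      ENNReal.ofReal (h ^ (d - 1) * (⨆ t : ℝ, FX t) *
        ∫ t in Set.Ioi (0 : ℝ), t ^ (d - 1) * K1 t) := by
  -- the truncated kernel, globally antitone hence measurable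
  set w : ℝ → ℝ := fun t => h⁻¹ * K1 (max t 0 / h) with hw_def
  have hw_anti : Antitone w := by
    intro s t hst
    apply mul_le_mul_of_nonneg_left _ (inv_nonneg.2 hh.le)
    apply hK1_anti
    · exact Set.mem_Ici.2 (div_nonneg (le_max_right _ _) hh.le)
    · exact Set.mem_Ici.2 (div_nonneg (le_max_right _ _) hh.le)
    · gcongr
  have hw_meas : Measurable w := hw_anti.measurable
  have hw_nonneg : ∀ t, 0 ≤ w t := fun t => mul_nonneg (inv_nonneg.2 hh.le) (hK1_nonneg _)
  have hw_eq : ∀ t, 0 ≤ t → w t = h⁻¹ * K1 (t / h) := by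
    intro t ht
    simp [hw_def, max_eq_left ht]
  have hψ_le' : ∀ z, ψ z ≤ w ‖x - z‖ := by
    intro z
    rw [hw_eq _ (norm_nonneg _)]
    exact hψ_le z
  -- translation invariance : reduce to integrals centered at x
  have hmap : Measure.map (fun y : EuclideanSpace ℝ (Fin d) => x - y)
      (volume : Measure (EuclideanSpace ℝ (Fin d))) = volume := by
    have h1 : (fun y : EuclideanSpace ℝ (Fin d) => x - y) =
        (fun y => x + y) ∘ (fun y => -y) := by
      ext y; simp [sub_eq_add_neg]
    rw [h1, ← Measure.map_map (measurable_const_add x) measurable_neg,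
      Measure.map_neg_eq_self,
      Measure.IsAddLeftInvariant.map_add_left_eq_self (μ := (volume : Measure (EuclideanSpace ℝ (Fin d)))) x]
  have htrans : ∀ (f : EuclideanSpace ℝ (Fin d) → ℝ≥0∞), Measurable f →
      ∫⁻ z, f z ∂(volume : Measure (EuclideanSpace ℝ (Fin d))) = ∫⁻ y, f (x - y) ∂volume := by
    intro f hf
    conv_lhs => rw [← hmap]
    rw [lintegral_map hf (by fun_prop)]
  -- the inner spherical integral
  set A : ℝ → ℝ≥0∞ := fun r =>
    ∫⁻ ω : Metric.sphere (0 : EuclideanSpace ℝ (Fin d)) 1,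
      ENNReal.ofReal (fX (x - r • (ω : EuclideanSpace ℝ (Fin d))))
      ∂((volume : Measure (EuclideanSpace ℝ (Fin d))).toSphere) with hA_def
  have hsm : Measurable (fun p : Metric.sphere (0 : EuclideanSpace ℝ (Fin d)) 1 × ℝ =>
      ENNReal.ofReal (fX (x - p.2 • (p.1 : EuclideanSpace ℝ (Fin d))))) := by
    apply Measurable.ennreal_ofReal
    apply hfX_meas.comp
    exact measurable_const.sub (measurable_snd.smul (measurable_subtype_coe.comp measurable_fst))
  have hA_meas : Measurable A :=
    Measurable.lintegral_prod_left
      (μ := (volume : Measure (EuclideanSpace ℝ (Fin d))).toSphere)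
      (f := fun (ω : Metric.sphere (0 : EuclideanSpace ℝ (Fin d)) 1) (r : ℝ) =>
        ENNReal.ofReal (fX (x - r • (ω : EuclideanSpace ℝ (Fin d))))) hsm
  -- total mass identity
  have hg2_meas : Measurable (fun y : EuclideanSpace ℝ (Fin d) =>
      ENNReal.ofReal (fX (x - y))) :=
    (hfX_meas.comp (measurable_const.sub measurable_id)).ennreal_ofReal
  have htot : ∫⁻ r in Set.Ioi (0 : ℝ), ENNReal.ofReal (r ^ (d - 1)) * A r ∂volume = 1 := by
    have := aux_polar hd (fun y => ENNReal.ofReal (fX (x - y))) hg2_meas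
    rw [← this, ← htrans _ hfX_meas.ennreal_ofReal, hfX_mass]
  -- a.e. bound on A
  have hAfin : ∀ᵐ r ∂(volume.restrict (Set.Ioi (0 : ℝ))), A r ≤ ENNReal.ofReal (⨆ t : ℝ, FX t) := by
    have hlt : ∀ᵐ r ∂(volume.restrict (Set.Ioi (0 : ℝ))),
        ENNReal.ofReal (r ^ (d - 1)) * A r < ⊤ := by
      apply ae_lt_top
      · exact ((measurable_id.pow_const (d - 1)).ennreal_ofReal).mul hA_meas
      · rw [htot]; exact ENNReal.one_ne_top
    filter_upwards [hlt, ae_restrict_mem measurableSet_Ioi] with r hr hrpos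
    have hrpow : (0 : ℝ) < r ^ (d - 1) := pow_pos hrpos _
    have hAr : A r < ⊤ := by
      by_contra hc
      push_neg at hc
      rw [top_le_iff.1 hc, ENNReal.mul_top (ENNReal.ofReal_pos.2 hrpow).ne'] at hr
      exact absurd hr (lt_irrefl _)
    have hint : Integrable (fun ω : Metric.sphere (0 : EuclideanSpace ℝ (Fin d)) 1 =>
        fX (x - r • (ω : EuclideanSpace ℝ (Fin d))))
        ((volume : Measure (EuclideanSpace ℝ (Fin d))).toSphere) := by
      constructor
      · exact (hfX_meas.comp (measurable_const.sub
          (measurable_subtype_coe.const_smul r))).aestronglyMeasurable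
      · rw [hasFiniteIntegral_iff_ofReal (Filter.Eventually.of_forall fun ω => hfX_nonneg _)]
        exact hAr
    have hofreal : ENNReal.ofReal (FX r) = A r := by
      rw [hFX_def r, hA_def]
      exact ofReal_integral_eq_lintegral_ofReal hint
        (Filter.Eventually.of_forall fun ω => hfX_nonneg _)
    rw [← hofreal]
    exact ENNReal.ofReal_le_ofReal (le_ciSup hFX_bdd r)
  have hg1_meas : Measurable (fun y : EuclideanSpace ℝ (Fin d) =>
      ENNReal.ofReal (w ‖y‖) * ENNReal.ofReal (fX (x - y))) := by
    apply Measurable.mul (f := fun y : EuclideanSpace ℝ (Fin d) => ENNReal.ofReal (w ‖y‖))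
      (g := fun y => ENNReal.ofReal (fX (x - y)))
    · exact ((hw_meas.comp measurable_norm)).ennreal_ofReal
    · exact hg2_meas
  have hsup_nonneg : 0 ≤ ⨆ t : ℝ, FX t := by
    have h0 : 0 ≤ FX 0 := by
      rw [hFX_def 0]
      exact integral_nonneg (fun ω => hfX_nonneg _)
    exact le_trans h0 (le_ciSup hFX_bdd 0)
  calc ∫⁻ z, ENNReal.ofReal (ψ z) * ENNReal.ofReal (fX z)
        ∂(volume : Measure (EuclideanSpace ℝ (Fin d)))
      ≤ ∫⁻ z, ENNReal.ofReal (w ‖x - z‖) * ENNReal.ofReal (fX z) ∂volume := by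
        apply lintegral_mono
        intro z
        exact mul_le_mul_left (ENNReal.ofReal_le_ofReal (hψ_le' z)) _
    _ = ∫⁻ y, ENNReal.ofReal (w ‖y‖) * ENNReal.ofReal (fX (x - y)) ∂volume := by
        rw [htrans (fun z => ENNReal.ofReal (w ‖x - z‖) * ENNReal.ofReal (fX z))
          (((hw_meas.comp (measurable_const.sub measurable_id').norm)).ennreal_ofReal.mul
            hfX_meas.ennreal_ofReal)]
        apply lintegral_congr
        intro y
        rw [sub_sub_cancel]
    _ = ∫⁻ r in Set.Ioi (0 : ℝ), ENNReal.ofReal (r ^ (d - 1)) *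
          ∫⁻ ω : Metric.sphere (0 : EuclideanSpace ℝ (Fin d)) 1,
            ENNReal.ofReal (w ‖r • (ω : EuclideanSpace ℝ (Fin d))‖) *
            ENNReal.ofReal (fX (x - r • (ω : EuclideanSpace ℝ (Fin d))))
            ∂((volume : Measure (EuclideanSpace ℝ (Fin d))).toSphere)
          ∂volume :=
        aux_polar hd _ hg1_meas
    _ = ∫⁻ r in Set.Ioi (0 : ℝ), ENNReal.ofReal (r ^ (d - 1)) *
          (ENNReal.ofReal (w r) * A r) ∂volume := by
        apply setLIntegral_congr_fun measurableSet_Ioi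
        intro r hr; dsimp only
        congr 1
        rw [hA_def, ← lintegral_const_mul' _ _ ENNReal.ofReal_ne_top]
        apply lintegral_congr
        intro ω
        congr 3
        rw [norm_smul, Real.norm_eq_abs, abs_of_pos hr,
          mem_sphere_zero_iff_norm.1 ω.2, mul_one]
    _ ≤ ∫⁻ r in Set.Ioi (0 : ℝ), ENNReal.ofReal (r ^ (d - 1)) *
          (ENNReal.ofReal (w r) * ENNReal.ofReal (⨆ t : ℝ, FX t)) ∂volume := by
        apply lintegral_mono_ae
        filter_upwards [hAfin] with r hr
        exact mul_le_mul_right (mul_le_mul_right hr _) _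
    _ = ENNReal.ofReal (⨆ t : ℝ, FX t) *
          ∫⁻ r in Set.Ioi (0 : ℝ), ENNReal.ofReal (r ^ (d - 1)) * ENNReal.ofReal (w r)
          ∂volume := by
        rw [← lintegral_const_mul' _ _ ENNReal.ofReal_ne_top]
        apply lintegral_congr
        intro r
        ring
    _ ≤ ENNReal.ofReal (h ^ (d - 1) * (⨆ t : ℝ, FX t) *
        ∫ t in Set.Ioi (0 : ℝ), t ^ (d - 1) * K1 t) := by
        have hGint : IntegrableOn (fun r : ℝ => (h⁻¹ * r) ^ (d - 1) * K1 (h⁻¹ * r))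
            (Set.Ioi (0 : ℝ)) := by
          have := (integrableOn_Ioi_comp_mul_left_iff
            (fun t : ℝ => t ^ (d - 1) * K1 t) 0 (inv_pos.2 hh)).2 (by simpa using hK1_mom)
          simpa using this
        have hφeq : ∀ r ∈ Set.Ioi (0 : ℝ), r ^ (d - 1) * w r =
            h ^ (d - 1) * h⁻¹ * ((h⁻¹ * r) ^ (d - 1) * K1 (h⁻¹ * r)) := by
          intro r hr
          have hr0 : (0 : ℝ) < r := hr
          have hhne : h ≠ 0 := hh.ne'
          rw [hw_eq r hr0.le, div_eq_inv_mul, mul_pow, inv_pow]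
          field_simp
        have hφint : IntegrableOn (fun r : ℝ => r ^ (d - 1) * w r) (Set.Ioi (0 : ℝ)) := by
          apply Integrable.congr (hGint.const_mul (h ^ (d - 1) * h⁻¹))
          filter_upwards [ae_restrict_mem measurableSet_Ioi] with r hr
          exact (hφeq r hr).symm
        have hJ : ∫⁻ r in Set.Ioi (0 : ℝ),
            ENNReal.ofReal (r ^ (d - 1)) * ENNReal.ofReal (w r) ∂volume =
            ENNReal.ofReal (∫ r in Set.Ioi (0 : ℝ), r ^ (d - 1) * w r) := by
          rw [ofReal_integral_eq_lintegral_ofReal hφint ?_]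
          · apply setLIntegral_congr_fun measurableSet_Ioi
            intro r hr; dsimp only
            rw [ENNReal.ofReal_mul (pow_nonneg (le_of_lt hr) (d - 1))]
          · filter_upwards [ae_restrict_mem measurableSet_Ioi] with r hr
            exact mul_nonneg (pow_nonneg (le_of_lt hr) (d - 1)) (hw_nonneg r)
        have hIeq : ∫ r in Set.Ioi (0 : ℝ), r ^ (d - 1) * w r =
            h ^ (d - 1) * ∫ t in Set.Ioi (0 : ℝ), t ^ (d - 1) * K1 t := by
          rw [setIntegral_congr_fun measurableSet_Ioi hφeq]
          rw [MeasureTheory.integral_const_mul]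
          rw [integral_comp_mul_left_Ioi (fun t : ℝ => t ^ (d - 1) * K1 t) 0 (inv_pos.2 hh)]
          rw [mul_zero, inv_inv, smul_eq_mul]
          field_simp
        rw [hJ, hIeq, ← ENNReal.ofReal_mul hsup_nonneg]
        apply ENNReal.ofReal_le_ofReal
        apply le_of_eq
        ring

end AuxPolar

/-- Bias control for kernel-weighted conditional c.d.f.s:
with `X_1, …, X_m` i.i.d. with density `f_X`, weights `w̃_k(x) = K_h(‖x - X_k‖)`,
a conditional c.d.f. `F(v | ·)` that is `M`-Lipschitz for every `v`, and a
non-increasing rescaled kernel, for every `γ ∈ (0,1)`, with probability at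
least `1 - γ`,
`sup_v |Σ_k w̃_k(x)(F(v|X_k) - F(v|x))| ≤ m·D_h(x) + M·sup_{t≥0}{tK_1(t)}·√(m log(1/γ)/2)`,
where `D_h(x) = h^{d-1}·‖F_X(·,x)‖_∞·∫_0^∞ t^{d-1}K_1(t)dt` and
`F_X(t,x) = ∫_{S^{d-1}} f_X(x - tω) dσ(ω)`. -/
theorem kernel_weighted_cdf_bias_control
    {Ω : Type*} [MeasurableSpace Ω]
    (μ : Measure Ω) [IsProbabilityMeasure μ]
    (d : ℕ) (hd : 1 ≤ d)
    -- the i.i.d. sample `X_1, …, X_m`, with common density `f_X`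
    (m : ℕ) (Xs : Fin m → Ω → EuclideanSpace ℝ (Fin d))
    (hXs_meas : ∀ k, Measurable (Xs k))
    (hXs_indep : iIndepFun Xs μ)
    (fX : EuclideanSpace ℝ (Fin d) → ℝ) (hfX_meas : Measurable fX)
    (hfX_nonneg : ∀ x, 0 ≤ fX x)
    (hXs_law : ∀ k, μ.map (Xs k) =
      volume.withDensity (fun x => ENNReal.ofReal (fX x)))
    -- the kernel `K_1` and its rescaling `K_h`
    (K1 : ℝ → ℝ) (hK1_nonneg : ∀ t, 0 ≤ K1 t)
    (hK1_int : ∫ t in Set.Ioi (0 : ℝ), K1 t = 1)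
    (h : ℝ) (hh : 0 < h)
    (hKh_antitone : AntitoneOn (fun t => h⁻¹ * K1 (t / h)) (Set.Ici (0 : ℝ)))
    (hK1_sup_bdd : BddAbove (Set.range fun t : Set.Ici (0 : ℝ) => (t : ℝ) * K1 (t : ℝ)))
    -- the conditional c.d.f. `F(v | z)` of `V_φ(X,Y)` given `X = z`,
    -- `M`-Lipschitz in `z` for every `v`
    (Fc : EuclideanSpace ℝ (Fin d) → ℝ → ℝ)
    (hFc_cdf : ∀ z v, Fc z v ∈ Set.Icc (0 : ℝ) 1)
    (hFc_mono : ∀ z, Monotone (Fc z))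
    (M : ℝ≥0) (hFc_lip : ∀ v, LipschitzWith M (fun z => Fc z v))
    -- the fixed covariate point `x`
    (x : EuclideanSpace ℝ (Fin d))
    -- `F_X(·, x)` and `D_h(x)`, assumed finite
    (FX : ℝ → ℝ)
    (hFX_def : ∀ t, FX t =
      ∫ ω : Metric.sphere (0 : EuclideanSpace ℝ (Fin d)) 1,
        fX (x - t • (ω : EuclideanSpace ℝ (Fin d)))
        ∂((volume : Measure (EuclideanSpace ℝ (Fin d))).toSphere))
    (hFX_bdd : BddAbove (Set.range FX))
    (hK1_mom : IntegrableOn (fun t => t ^ (d - 1) * K1 t) (Set.Ioi (0 : ℝ))) :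
    ∀ γ : ℝ, γ ∈ Set.Ioo (0 : ℝ) 1 →
      ENNReal.ofReal (1 - γ) ≤
        μ {ω |
          (⨆ v : ℝ, |∑ k : Fin m,
              (h⁻¹ * K1 (‖x - Xs k ω‖ / h)) * (Fc (Xs k ω) v - Fc x v)|) ≤
            m * (h ^ (d - 1) * (⨆ t : ℝ, FX t) *
                ∫ t in Set.Ioi (0 : ℝ), t ^ (d - 1) * K1 t) +
              (M : ℝ) * (⨆ t : Set.Ici (0 : ℝ), (t : ℝ) * K1 (t : ℝ)) *
                Real.sqrt (m * Real.log (1 / γ) / 2)} := by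
  intro γ hγ
  obtain ⟨hγ0, hγ1⟩ := hγ
  set S : ℝ := ⨆ t : Set.Ici (0 : ℝ), (t : ℝ) * K1 (t : ℝ) with hS_def
  set D : ℝ := h ^ (d - 1) * (⨆ t : ℝ, FX t) * ∫ t in Set.Ioi (0 : ℝ), t ^ (d - 1) * K1 t
    with hD_def
  have hS_nonneg : 0 ≤ S := by
    have := le_ciSup hK1_sup_bdd (⟨0, Set.self_mem_Ici⟩ : Set.Ici (0 : ℝ))
    simpa [hS_def] using this
  have hsupFX_nonneg : 0 ≤ ⨆ t : ℝ, FX t := by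
    have h0 : 0 ≤ FX 0 := by
      rw [hFX_def 0]
      exact integral_nonneg (fun ω => hfX_nonneg _)
    exact le_trans h0 (le_ciSup hFX_bdd 0)
  have hmom_nonneg : 0 ≤ ∫ t in Set.Ioi (0 : ℝ), t ^ (d - 1) * K1 t :=
    setIntegral_nonneg measurableSet_Ioi
      (fun t ht => mul_nonneg (pow_nonneg (le_of_lt ht) _) (hK1_nonneg t))
  have hD_nonneg : 0 ≤ D :=
    mul_nonneg (mul_nonneg (pow_nonneg hh.le _) hsupFX_nonneg) hmom_nonneg
  have hL_pos : 0 < Real.log (1 / γ) := Real.log_pos (one_lt_one_div hγ0 hγ1)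
  -- the kernel is antitone on `[0, ∞)`
  have hK1_anti : AntitoneOn K1 (Set.Ici (0 : ℝ)) := by
    intro s hs t ht hst
    have h1 := hKh_antitone (Set.mem_Ici.2 (mul_nonneg hh.le hs))
      (Set.mem_Ici.2 (mul_nonneg hh.le ht)) (mul_le_mul_of_nonneg_left hst hh.le)
    simp only at h1
    rw [mul_div_cancel_left₀ _ hh.ne', mul_div_cancel_left₀ _ hh.ne'] at h1
    have h2 := mul_le_mul_of_nonneg_left h1 hh.le
    rwa [← mul_assoc, ← mul_assoc, mul_inv_cancel₀ hh.ne', one_mul, one_mul] at h2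
  -- the truncated weight function
  set w : ℝ → ℝ := fun t => h⁻¹ * K1 (max t 0 / h) with hw_def
  have hw_anti : Antitone w := by
    intro s t hst
    apply mul_le_mul_of_nonneg_left _ (inv_nonneg.2 hh.le)
    apply hK1_anti
    · exact Set.mem_Ici.2 (div_nonneg (le_max_right _ _) hh.le)
    · exact Set.mem_Ici.2 (div_nonneg (le_max_right _ _) hh.le)
    · gcongr
  have hw_meas : Measurable w := hw_anti.measurable
  have hw_eq : ∀ t, 0 ≤ t → w t = h⁻¹ * K1 (t / h) := by
    intro t ht
    simp [hw_def, max_eq_left ht]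
  set ψ : EuclideanSpace ℝ (Fin d) → ℝ :=
    fun z => w ‖x - z‖ * min 1 ((M : ℝ) * ‖x - z‖) with hψ_def
  have hψ_val : ∀ z, ψ z = (h⁻¹ * K1 (‖x - z‖ / h)) * min 1 ((M : ℝ) * ‖x - z‖) := by
    intro z
    show w ‖x - z‖ * min 1 ((M : ℝ) * ‖x - z‖) = _
    rw [hw_eq _ (norm_nonneg _)]
  have hψ_meas : Measurable ψ :=
    (hw_meas.comp ((measurable_const.sub measurable_id').norm)).mul
      (measurable_const.min (((measurable_const.sub measurable_id').norm).const_mul (M : ℝ)))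
  have hwt_nonneg : ∀ z : EuclideanSpace ℝ (Fin d), 0 ≤ h⁻¹ * K1 (‖x - z‖ / h) :=
    fun z => mul_nonneg (inv_nonneg.2 hh.le) (hK1_nonneg _)
  have hmin_nonneg : ∀ z : EuclideanSpace ℝ (Fin d), 0 ≤ min 1 ((M : ℝ) * ‖x - z‖) :=
    fun z => le_min zero_le_one (mul_nonneg M.coe_nonneg (norm_nonneg _))
  have hψ_nonneg : ∀ z, 0 ≤ ψ z := by
    intro z
    rw [hψ_val z]
    exact mul_nonneg (hwt_nonneg z) (hmin_nonneg z)
  have hψ_le_w : ∀ z, ψ z ≤ h⁻¹ * K1 (‖x - z‖ / h) := by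
    intro z
    rw [hψ_val z]
    exact (mul_le_mul_of_nonneg_left (min_le_left _ _) (hwt_nonneg z)).trans
      (le_of_eq (mul_one _))
  have hψ_le_B : ∀ z, ψ z ≤ (M : ℝ) * S := by
    intro z
    rw [hψ_val z]
    have h1 : (h⁻¹ * K1 (‖x - z‖ / h)) * min 1 ((M : ℝ) * ‖x - z‖) ≤
        (h⁻¹ * K1 (‖x - z‖ / h)) * ((M : ℝ) * ‖x - z‖) :=
      mul_le_mul_of_nonneg_left (min_le_right _ _) (hwt_nonneg z)
    have h2 : (h⁻¹ * K1 (‖x - z‖ / h)) * ((M : ℝ) * ‖x - z‖) =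
        (M : ℝ) * ((‖x - z‖ / h) * K1 (‖x - z‖ / h)) := by
      rw [div_eq_mul_inv]
      ring
    have h3 : (‖x - z‖ / h) * K1 (‖x - z‖ / h) ≤ S := by
      have := le_ciSup hK1_sup_bdd
        (⟨‖x - z‖ / h, Set.mem_Ici.2 (div_nonneg (norm_nonneg _) hh.le)⟩ : Set.Ici (0 : ℝ))
      simpa [hS_def] using this
    calc (h⁻¹ * K1 (‖x - z‖ / h)) * min 1 ((M : ℝ) * ‖x - z‖)
        ≤ (h⁻¹ * K1 (‖x - z‖ / h)) * ((M : ℝ) * ‖x - z‖) := h1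
      _ = (M : ℝ) * ((‖x - z‖ / h) * K1 (‖x - z‖ / h)) := h2
      _ ≤ (M : ℝ) * S := mul_le_mul_of_nonneg_left h3 M.coe_nonneg
  -- the sampled weights
  set U : Fin m → Ω → ℝ := fun k ω => ψ (Xs k ω) with hU_def
  have hU_meas : ∀ k, Measurable (U k) := fun k => hψ_meas.comp (hXs_meas k)
  have hU_mem : ∀ k ω, U k ω ∈ Set.Icc (0 : ℝ) ((M : ℝ) * S) :=
    fun k ω => ⟨hψ_nonneg _, hψ_le_B _⟩
  have hU_indep : iIndepFun U μ :=
    hXs_indep.comp (fun _ => ψ) (fun _ => hψ_meas)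
  -- pointwise domination of the supremum
  have hsup_le : ∀ ω, (⨆ v : ℝ, |∑ k : Fin m,
      (h⁻¹ * K1 (‖x - Xs k ω‖ / h)) * (Fc (Xs k ω) v - Fc x v)|) ≤ ∑ k : Fin m, U k ω := by
    intro ω
    apply ciSup_le
    intro v
    calc |∑ k : Fin m, (h⁻¹ * K1 (‖x - Xs k ω‖ / h)) * (Fc (Xs k ω) v - Fc x v)|
        ≤ ∑ k : Fin m, |(h⁻¹ * K1 (‖x - Xs k ω‖ / h)) * (Fc (Xs k ω) v - Fc x v)| :=
          Finset.abs_sum_le_sum_abs _ _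
      _ ≤ ∑ k : Fin m, U k ω := by
          apply Finset.sum_le_sum
          intro k _
          rw [abs_mul, abs_of_nonneg (hwt_nonneg (Xs k ω))]
          show _ ≤ ψ (Xs k ω)
          rw [hψ_val (Xs k ω)]
          apply mul_le_mul_of_nonneg_left _ (hwt_nonneg _)
          apply le_min
          · have h1 := hFc_cdf (Xs k ω) v
            have h2 := hFc_cdf x v
            rw [abs_sub_le_iff]
            exact ⟨by linarith [h1.2, h2.1], by linarith [h1.1, h2.2]⟩
          · have hlip := (hFc_lip v).dist_le_mul (Xs k ω) x
            rw [Real.dist_eq, dist_eq_norm, norm_sub_rev] at hlip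
            exact hlip
  rcases Nat.eq_zero_or_pos m with hm0 | hm
  · -- trivial case `m = 0`
    subst hm0
    have hT : {ω : Ω | (⨆ v : ℝ, |∑ k : Fin 0,
        (h⁻¹ * K1 (‖x - Xs k ω‖ / h)) * (Fc (Xs k ω) v - Fc x v)|) ≤
          (0 : ℕ) * D + (M : ℝ) * S * Real.sqrt ((0 : ℕ) * Real.log (1 / γ) / 2)} =
        Set.univ := by
      apply Set.eq_univ_iff_forall.2
      intro ω
      simp [ciSup_const]
    rw [show ((0 : ℕ) : ℝ) = ((0 : ℕ) : ℝ) from rfl] at hT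
    rw [hT, measure_univ]
    exact ENNReal.ofReal_le_one.2 (by linarith)
  · have hB_nonneg : 0 ≤ (M : ℝ) * S := mul_nonneg M.coe_nonneg hS_nonneg
    have hRHS2_nonneg : 0 ≤ (M : ℝ) * S * Real.sqrt (m * Real.log (1 / γ) / 2) :=
      mul_nonneg hB_nonneg (Real.sqrt_nonneg _)
    rcases eq_or_lt_of_le hB_nonneg with hB0 | hBpos
    · -- degenerate case: the weights vanish identically
      have hU0 : ∀ k ω, U k ω = 0 := fun k ω =>
        le_antisymm (by rw [← hB0] at hU_mem; exact (hU_mem k ω).2) (hU_mem k ω).1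
      have hT : {ω : Ω | (⨆ v : ℝ, |∑ k : Fin m,
          (h⁻¹ * K1 (‖x - Xs k ω‖ / h)) * (Fc (Xs k ω) v - Fc x v)|) ≤
            m * D + (M : ℝ) * S * Real.sqrt (m * Real.log (1 / γ) / 2)} = Set.univ := by
        apply Set.eq_univ_iff_forall.2
        intro ω
        have h1 : ∑ k : Fin m, U k ω = 0 := Finset.sum_eq_zero (fun k _ => hU0 k ω)
        have h2 := hsup_le ω
        rw [h1] at h2
        simp only [Set.mem_setOf_eq]
        have h3 : (0 : ℝ) ≤ m * D + (M : ℝ) * S * Real.sqrt (m * Real.log (1 / γ) / 2) :=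
          add_nonneg (mul_nonneg (Nat.cast_nonneg m) hD_nonneg) hRHS2_nonneg
        linarith
      rw [hT, measure_univ]
      exact ENNReal.ofReal_le_one.2 (by linarith)
    · -- main case : Hoeffding bound
      set ε : ℝ := ((M : ℝ) * S) * Real.sqrt (m * Real.log (1 / γ) / 2) with hε_def
      have hm' : (0 : ℝ) < m := Nat.cast_pos.2 hm
      have hsqrt_pos : 0 < Real.sqrt (m * Real.log (1 / γ) / 2) :=
        Real.sqrt_pos.2 (by positivity)
      have hε_pos : 0 < ε := mul_pos hBpos hsqrt_pos
      have htail := aux_hoeffding_tail μ hm U hU_meas hU_indep hBpos hU_mem hε_pos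
      have hexp_eq : Real.exp (-2 * ε ^ 2 / (m * ((M : ℝ) * S) ^ 2)) = γ := by
        have hsq : ε ^ 2 = ((M : ℝ) * S) ^ 2 * (m * Real.log (1 / γ) / 2) := by
          rw [hε_def, mul_pow, Real.sq_sqrt (by positivity)]
        rw [hsq]
        have harg : -2 * (((M : ℝ) * S) ^ 2 * (m * Real.log (1 / γ) / 2)) /
            (m * ((M : ℝ) * S) ^ 2) = -Real.log (1 / γ) := by
          field_simp [(mul_ne_zero_iff.1 hBpos.ne').1, (mul_ne_zero_iff.1 hBpos.ne').2]
        rw [harg, one_div, Real.log_inv, neg_neg, Real.exp_log hγ0]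
      have hAbad_le : μ {ω | ε ≤ ∑ k : Fin m, (U k ω - ∫ ω', U k ω' ∂μ)} ≤
          ENNReal.ofReal γ := by
        rw [ENNReal.le_ofReal_iff_toReal_le (measure_ne_top μ _) hγ0.le]
        exact htail.trans (le_of_eq hexp_eq)
      -- the mean of each weight is at most `D`
      have hmass : ∫⁻ z, ENNReal.ofReal (fX z)
          ∂(volume : Measure (EuclideanSpace ℝ (Fin d))) = 1 := by
        have h2 : (μ.map (Xs ⟨0, hm⟩)) Set.univ = 1 := by
          rw [Measure.map_apply (hXs_meas _) MeasurableSet.univ]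
          simp
        rw [hXs_law ⟨0, hm⟩, withDensity_apply _ MeasurableSet.univ, setLIntegral_univ] at h2
        exact h2
      have hexp_le : ∀ k, ∫ ω', U k ω' ∂μ ≤ D := by
        intro k
        have h1 : ∫ ω', U k ω' ∂μ = ∫ z, ψ z ∂(μ.map (Xs k)) :=
          (integral_map (hXs_meas k).aemeasurable hψ_meas.aestronglyMeasurable).symm
        rw [h1, hXs_law k, integral_eq_lintegral_of_nonneg_ae
          (Filter.Eventually.of_forall hψ_nonneg) hψ_meas.aestronglyMeasurable]
        apply ENNReal.toReal_le_of_le_ofReal hD_nonneg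
        rw [lintegral_withDensity_eq_lintegral_mul _ hfX_meas.ennreal_ofReal
          hψ_meas.ennreal_ofReal]
        calc ∫⁻ z, ((fun z => ENNReal.ofReal (fX z)) * fun z => ENNReal.ofReal (ψ z)) z
              ∂(volume : Measure (EuclideanSpace ℝ (Fin d)))
            = ∫⁻ z, ENNReal.ofReal (ψ z) * ENNReal.ofReal (fX z)
              ∂(volume : Measure (EuclideanSpace ℝ (Fin d))) := by
              apply lintegral_congr
              intro z
              simp [mul_comm]
          _ ≤ ENNReal.ofReal D :=
              aux_exp_bound hd fX hfX_meas hfX_nonneg hmass K1 hK1_nonneg h hh hK1_anti x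
                FX hFX_def hFX_bdd hK1_mom ψ hψ_meas hψ_nonneg hψ_le_w
      -- inclusion of the good event
      have hincl : {ω | ε ≤ ∑ k : Fin m, (U k ω - ∫ ω', U k ω' ∂μ)}ᶜ ⊆
          {ω : Ω | (⨆ v : ℝ, |∑ k : Fin m,
            (h⁻¹ * K1 (‖x - Xs k ω‖ / h)) * (Fc (Xs k ω) v - Fc x v)|) ≤
              m * D + (M : ℝ) * S * Real.sqrt (m * Real.log (1 / γ) / 2)} := by
        intro ω hω
        simp only [Set.mem_compl_iff, Set.mem_setOf_eq, not_le] at hω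
        rw [Finset.sum_sub_distrib] at hω
        have h2 : ∑ k : Fin m, (∫ ω', U k ω' ∂μ) ≤ m * D := by
          calc ∑ k : Fin m, (∫ ω', U k ω' ∂μ) ≤ ∑ _k : Fin m, D :=
              Finset.sum_le_sum (fun k _ => hexp_le k)
            _ = m * D := by
              rw [Finset.sum_const, Finset.card_univ, Fintype.card_fin, nsmul_eq_mul]
        simp only [Set.mem_setOf_eq]
        calc (⨆ v : ℝ, |∑ k : Fin m,
            (h⁻¹ * K1 (‖x - Xs k ω‖ / h)) * (Fc (Xs k ω) v - Fc x v)|)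
            ≤ ∑ k : Fin m, U k ω := hsup_le ω
          _ ≤ m * D + ε := by linarith
          _ = m * D + (M : ℝ) * S * Real.sqrt (m * Real.log (1 / γ) / 2) := by
              rw [hε_def]
      -- conclusion
      have hsplit : (1 : ℝ≥0∞) ≤ μ {ω | ε ≤ ∑ k : Fin m, (U k ω - ∫ ω', U k ω' ∂μ)} +
          μ {ω | ε ≤ ∑ k : Fin m, (U k ω - ∫ ω', U k ω' ∂μ)}ᶜ := by
        rw [← measure_univ (μ := μ),
          ← Set.union_compl_self {ω | ε ≤ ∑ k : Fin m, (U k ω - ∫ ω', U k ω' ∂μ)}]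
        exact measure_union_le _ _
      have hkey : ENNReal.ofReal (1 - γ) + ENNReal.ofReal γ ≤
          μ {ω | ε ≤ ∑ k : Fin m, (U k ω - ∫ ω', U k ω' ∂μ)}ᶜ + ENNReal.ofReal γ := by
        rw [← ENNReal.ofReal_add (by linarith) hγ0.le]
        simp only [sub_add_cancel, ENNReal.ofReal_one]
        calc (1 : ℝ≥0∞) ≤ μ {ω | ε ≤ ∑ k : Fin m, (U k ω - ∫ ω', U k ω' ∂μ)} +
            μ {ω | ε ≤ ∑ k : Fin m, (U k ω - ∫ ω', U k ω' ∂μ)}ᶜ := hsplit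
          _ ≤ ENNReal.ofReal γ +
              μ {ω | ε ≤ ∑ k : Fin m, (U k ω - ∫ ω', U k ω' ∂μ)}ᶜ :=
              add_le_add_left hAbad_le _
          _ = μ {ω | ε ≤ ∑ k : Fin m, (U k ω - ∫ ω', U k ω' ∂μ)}ᶜ + ENNReal.ofReal γ :=
              add_comm _ _
      exact le_trans ((ENNReal.add_le_add_iff_right ENNReal.ofReal_ne_top).1 hkey)
        (measure_mono hincl)
end
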